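/- arXiv:2402.01567 — 9 statements merged into one kernel-verified Lean document; each statement's English description precedes it below -/
import Mathlib

section
/- Discounted-to-dynamic conversion: for any online learning algorithm producing outputs Δ_0,...,Δ_{T-1} against losses v_1,...,v_T, any comparator sequence u_0,...,u_{T-1}, any β ∈ (0,1], any partition of [1,T] into consecutive intervals [a_1,b_1],...,[a_N,b_N] (a_1 = 1, b_N = T, a_{i+1} = b_i + 1), and any reals ū_1,...,ū_N, the dynamic regret ∑_{t=1}^T v_t (Δ_{t-1} - u_{t-1}) equals β R_{T;β}(ū_N) + (1-β) ∑_{i=1}^N ∑_{t∈[a_i,b_i]} R_{t;β}(ū_i) + β ∑_{i=1}^{N-1} (∑_{t=1}^{b_i} β^{b_i - t} v_t)(ū_{i+1} - ū_i) + ∑_{i=1}^N ∑_{t∈[a_i,b_i]} v_t (ū_i - u_{t-1}). -/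
/-- Telescoping sum over `Ioc`. -/
private lemma tele_aux (g : ℕ → ℝ) (p : ℕ) :
    ∀ q, p ≤ q → ∑ t ∈ Finset.Ioc p q, (g t - g (t - 1)) = g q - g p := by
  intro q hq
  induction q, hq using Nat.le_induction with
  | base => simp
  | succ q hq ih =>
    rw [Finset.sum_Ioc_succ_top (by omega : p ≤ q), ih]
    simp only [Nat.add_sub_cancel]
    ring

private lemma chain_aux (B : ℕ → ℕ) :
    ∀ n, (∀ i, 1 ≤ i → i ≤ n → B (i - 1) ≤ B i) → B 0 ≤ B n := by
  intro n
  induction n with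
  | zero => intro _; exact le_rfl
  | succ n ih =>
    intro h
    have h1 : B 0 ≤ B n := ih (fun i hi hin => h i hi (by omega))
    have h2 : B n ≤ B (n + 1) := by
      have := h (n + 1) (by omega) le_rfl
      simpa using this
    exact h1.trans h2

private lemma sumsum_aux (f : ℕ → ℝ) (B : ℕ → ℕ) :
    ∀ n, (∀ i, 1 ≤ i → i ≤ n → B (i - 1) ≤ B i) →
      ∑ i ∈ Finset.Icc 1 n, ∑ t ∈ Finset.Ioc (B (i - 1)) (B i), f t
        = ∑ t ∈ Finset.Ioc (B 0) (B n), f t := by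
  intro n
  induction n with
  | zero => intro _; simp
  | succ n ih =>
    intro h
    have h' : ∀ i, 1 ≤ i → i ≤ n → B (i - 1) ≤ B i := fun i hi hin => h i hi (by omega)
    have hB0 : B 0 ≤ B n := chain_aux B n h'
    have hstep : B n ≤ B (n + 1) := by simpa using h (n + 1) (by omega) le_rfl
    rw [Finset.sum_Icc_succ_top (by omega : 1 ≤ n + 1), ih h']
    simp only [Nat.add_sub_cancel]
    exact Finset.sum_Ioc_consecutive f hB0 hstep

theorem stmt_4 (T N : ℕ) (hT : 1 ≤ T) (hN : 1 ≤ N)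
    (v Δ u : ℕ → ℝ) (β : ℝ) (hβ : β ∈ Set.Ioc (0:ℝ) 1)
    (a b : ℕ → ℕ) (ubar : ℕ → ℝ)
    (ha1 : a 1 = 1) (hbN : b N = T)
    (hcons : ∀ i ∈ Finset.Icc 1 (N - 1), a (i + 1) = b i + 1)
    (hle : ∀ i ∈ Finset.Icc 1 N, a i ≤ b i)
    (R : ℕ → ℝ → ℝ)
    (hR : ∀ t x, R t x = ∑ s ∈ Finset.Icc 1 t, β ^ (t - s) * v s * (Δ (s - 1) - x)) :
    ∑ t ∈ Finset.Icc 1 T, v t * (Δ (t - 1) - u (t - 1))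
      = β * R T (ubar N)
        + (1 - β) * ∑ i ∈ Finset.Icc 1 N, ∑ t ∈ Finset.Icc (a i) (b i), R t (ubar i)
        + β * ∑ i ∈ Finset.Icc 1 (N - 1),
            (∑ t ∈ Finset.Icc 1 (b i), β ^ (b i - t) * v t) * (ubar (i + 1) - ubar i)
        + ∑ i ∈ Finset.Icc 1 N, ∑ t ∈ Finset.Icc (a i) (b i), v t * (ubar i - u (t - 1)) := by
  classical
  set S : ℕ → ℝ := fun m => ∑ t ∈ Finset.Icc 1 m, β ^ (m - t) * v t with hS
  -- basic facts about R
  have hR0 : ∀ x, R 0 x = 0 := by intro x; simp [hR]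
  have hS0 : S 0 = 0 := by simp [hS]
  have hRsub : ∀ t x y, R t x - R t y = S t * (y - x) := by
    intro t x y
    rw [hR, hR, ← Finset.sum_sub_distrib, hS, Finset.sum_mul]
    exact Finset.sum_congr rfl fun s _ => by ring
  have hrec : ∀ t x, R (t + 1) x = β * R t x + v (t + 1) * (Δ t - x) := by
    intro t x
    rw [hR, hR, Finset.sum_Icc_succ_top (by omega : 1 ≤ t + 1), Finset.mul_sum]
    congr 1
    · refine Finset.sum_congr rfl fun s hs => ?_
      have hs' : s ≤ t := (Finset.mem_Icc.mp hs).2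
      rw [Nat.succ_sub hs', pow_succ]
      ring
    · simp
  -- block lemma
  have hblock : ∀ p q, p ≤ q → ∀ x,
      ∑ t ∈ Finset.Ioc p q, v t * (Δ (t - 1) - x)
        = (1 - β) * ∑ t ∈ Finset.Ioc p q, R t x + β * (R q x - R p x) := by
    intro p q hpq x
    have e1 : ∀ t ∈ Finset.Ioc p q, v t * (Δ (t - 1) - x)
        = (1 - β) * R t x + β * (R t x - R (t - 1) x) := by
      intro t ht
      have ht1 : 1 ≤ t := le_trans (by omega) (Finset.mem_Ioc.mp ht).1
      obtain ⟨k, rfl⟩ : ∃ k, t = k + 1 := ⟨t - 1, by omega⟩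
      have := hrec k x
      simp only [Nat.add_sub_cancel]
      linarith [this]
    rw [Finset.sum_congr rfl e1, Finset.sum_add_distrib, ← Finset.mul_sum, ← Finset.mul_sum,
      tele_aux (fun t => R t x) p q hpq]
  -- the shifted endpoint function
  set B : ℕ → ℕ := fun i => if i = 0 then 0 else b i with hB
  have hB0 : B 0 = 0 := by simp [hB]
  have hBi : ∀ i, 1 ≤ i → B i = b i := by
    intro i hi; simp [hB, Nat.one_le_iff_ne_zero.mp hi]
  have haB : ∀ i, 1 ≤ i → i ≤ N → a i = B (i - 1) + 1 := by
    intro i h1 h2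
    rcases Nat.eq_or_lt_of_le h1 with h | h
    · simp [← h, ha1, hB]
    · have hi2 : 2 ≤ i := h
      have hmem : i - 1 ∈ Finset.Icc 1 (N - 1) := Finset.mem_Icc.mpr ⟨by omega, by omega⟩
      have h3 := hcons (i - 1) hmem
      rw [show i - 1 + 1 = i by omega] at h3
      rw [hBi (i - 1) (by omega)]
      omega
  have hmono : ∀ i, 1 ≤ i → i ≤ N → B (i - 1) ≤ B i := by
    intro i h1 h2
    have := hle i (Finset.mem_Icc.mpr ⟨h1, h2⟩)
    have := haB i h1 h2
    rw [hBi i h1]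
    omega
  have hset : ∀ i, 1 ≤ i → i ≤ N →
      Finset.Icc (a i) (b i) = Finset.Ioc (B (i - 1)) (B i) := by
    intro i h1 h2
    rw [haB i h1 h2, ← hBi i h1, Finset.Icc_add_one_left_eq_Ioc]
  have hBN : B N = T := by rw [hBi N hN, hbN]
  have hIoc : ∀ M : ℕ, Finset.Icc 1 M = Finset.Ioc 0 M := by
    intro M; ext x; simp only [Finset.mem_Icc, Finset.mem_Ioc]; omega
  -- partition of the whole sum
  have key1 : ∀ f : ℕ → ℝ,
      ∑ t ∈ Finset.Icc 1 T, f t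
        = ∑ i ∈ Finset.Icc 1 N, ∑ t ∈ Finset.Icc (a i) (b i), f t := by
    intro f
    have h2 := sumsum_aux f B N hmono
    rw [hB0, hBN] at h2
    rw [hIoc T, ← h2]
    refine Finset.sum_congr rfl fun i hi => ?_
    have hi' := Finset.mem_Icc.mp hi
    rw [hset i hi'.1 hi'.2]
  -- split the left side
  rw [key1 (fun t => v t * (Δ (t - 1) - u (t - 1)))]
  have split : ∀ i ∈ Finset.Icc 1 N,
      ∑ t ∈ Finset.Icc (a i) (b i), v t * (Δ (t - 1) - u (t - 1))
        = (∑ t ∈ Finset.Icc (a i) (b i), v t * (Δ (t - 1) - ubar i))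
          + ∑ t ∈ Finset.Icc (a i) (b i), v t * (ubar i - u (t - 1)) := by
    intro i _
    rw [← Finset.sum_add_distrib]
    exact Finset.sum_congr rfl fun t _ => by ring
  rw [Finset.sum_congr rfl split, Finset.sum_add_distrib]
  -- handle the regret part per block
  have hblock' : ∀ i ∈ Finset.Icc 1 N,
      ∑ t ∈ Finset.Icc (a i) (b i), v t * (Δ (t - 1) - ubar i)
        = (1 - β) * (∑ t ∈ Finset.Icc (a i) (b i), R t (ubar i))
          + β * (R (B i) (ubar i) - R (B (i - 1)) (ubar i)) := by
    intro i hi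
    have hi' := Finset.mem_Icc.mp hi
    rw [hset i hi'.1 hi'.2]
    exact hblock _ _ (hmono i hi'.1 hi'.2) (ubar i)
  rw [Finset.sum_congr rfl hblock', Finset.sum_add_distrib, ← Finset.mul_sum, ← Finset.mul_sum]
  -- the telescoping identity
  have keytele : ∑ i ∈ Finset.Icc 1 N, (R (B i) (ubar i) - R (B (i - 1)) (ubar i))
      = R T (ubar N)
        + ∑ i ∈ Finset.Icc 1 (N - 1), S (b i) * (ubar (i + 1) - ubar i) := by
    have e2 : ∀ i ∈ Finset.Icc 1 N,
        R (B i) (ubar i) - R (B (i - 1)) (ubar i)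
          = (R (B i) (ubar i) - R (B (i - 1)) (ubar (i - 1)))
            + S (B (i - 1)) * (ubar i - ubar (i - 1)) := by
      intro i _
      have := hRsub (B (i - 1)) (ubar (i - 1)) (ubar i)
      linarith [this]
    rw [Finset.sum_congr rfl e2, Finset.sum_add_distrib]
    have t1 : ∑ i ∈ Finset.Icc 1 N, (R (B i) (ubar i) - R (B (i - 1)) (ubar (i - 1)))
        = R T (ubar N) := by
      rw [hIoc N, tele_aux (fun i => R (B i) (ubar i)) 0 N (by omega)]
      simp [hB0, hR0, hBN]
    have t2 : ∑ i ∈ Finset.Icc 1 N, S (B (i - 1)) * (ubar i - ubar (i - 1))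
        = ∑ i ∈ Finset.Icc 1 (N - 1), S (b i) * (ubar (i + 1) - ubar i) := by
      rw [hIoc N, ← Finset.sum_Ioc_consecutive _ (by omega : (0:ℕ) ≤ 1) (by omega : 1 ≤ N)]
      have : ∑ i ∈ Finset.Ioc 0 1, S (B (i - 1)) * (ubar i - ubar (i - 1)) = 0 := by
        simp [hB0, hS0]
      rw [this, zero_add]
      have hmap : Finset.Ioc 1 N
          = Finset.map (addRightEmbedding 1) (Finset.Icc 1 (N - 1)) := by
        rw [Finset.map_add_right_Icc]
        have : N - 1 + 1 = N := by omega
        rw [this, ← Finset.Icc_add_one_left_eq_Ioc]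
      rw [hmap, Finset.sum_map]
      refine Finset.sum_congr rfl fun i hi => ?_
      have hi' := Finset.mem_Icc.mp hi
      simp only [addRightEmbedding_apply, Nat.add_sub_cancel]
      rw [hBi i hi'.1]
    rw [t1, t2]
  rw [keytele]
  ring
end

section
/- Static regret of scale-free FTRL: for all T > 0, any loss sequence v_1,...,v_T ∈ ℝ, and any comparator u ∈ ℝ, the iterates Δ_0 = 0 and Δ_t = -α (∑_{s=1}^t v_s)/√(∑_{s=1}^t v_s^2) (with Δ_t = 0 when the denominator vanishes) satisfy ∑_{t=1}^T v_t (Δ_{t-1} - u) ≤ (u^2/(2α) + √2 α) √(∑_{t=1}^T v_t^2) + 2 (max_{t∈[1,T]} |Δ_t|)(max_{t∈[1,T]} |v_t|). -/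
open Finset

noncomputable def Vv (v : ℕ → ℝ) (t : ℕ) : ℝ := ∑ s ∈ Finset.Icc 1 t, (v s) ^ 2
noncomputable def Sv (v : ℕ → ℝ) (t : ℕ) : ℝ := ∑ s ∈ Finset.Icc 1 t, v s
noncomputable def Hv (v : ℕ → ℝ) (t : ℕ) : ℝ := Real.sqrt (Vv v t)
noncomputable def Fv (α : ℝ) (v : ℕ → ℝ) (t : ℕ) (x : ℝ) : ℝ :=
  Hv v t * x ^ 2 / (2 * α) + Sv v t * x

lemma Vv_zero (v : ℕ → ℝ) : Vv v 0 = 0 := by simp [Vv]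
lemma Sv_zero (v : ℕ → ℝ) : Sv v 0 = 0 := by simp [Sv]
lemma Vv_succ (v : ℕ → ℝ) (n : ℕ) : Vv v (n+1) = Vv v n + v (n+1) ^ 2 := by
  simp [Vv, Finset.sum_Icc_succ_top (Nat.succ_le_succ (Nat.zero_le n))]
lemma Sv_succ (v : ℕ → ℝ) (n : ℕ) : Sv v (n+1) = Sv v n + v (n+1) := by
  simp [Sv, Finset.sum_Icc_succ_top (Nat.succ_le_succ (Nat.zero_le n))]
lemma Vv_nonneg (v : ℕ → ℝ) (t : ℕ) : 0 ≤ Vv v t :=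
  Finset.sum_nonneg fun i _ => sq_nonneg _
lemma Vv_mono (v : ℕ → ℝ) {a b : ℕ} (h : a ≤ b) : Vv v a ≤ Vv v b :=
  Finset.sum_le_sum_of_subset_of_nonneg (Finset.Icc_subset_Icc_right h)
    (fun i _ _ => sq_nonneg _)
lemma Hv_nonneg (v : ℕ → ℝ) (t : ℕ) : 0 ≤ Hv v t := Real.sqrt_nonneg _
lemma Hv_zero (v : ℕ → ℝ) : Hv v 0 = 0 := by simp [Hv, Vv_zero]
lemma Hv_mono (v : ℕ → ℝ) {a b : ℕ} (h : a ≤ b) : Hv v a ≤ Hv v b :=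
  Real.sqrt_le_sqrt (Vv_mono v h)
lemma Hv_sq (v : ℕ → ℝ) (t : ℕ) : Hv v t ^ 2 = Vv v t := Real.sq_sqrt (Vv_nonneg v t)
lemma Hv_pos (v : ℕ → ℝ) (t : ℕ) (h : Vv v t ≠ 0) : 0 < Hv v t :=
  Real.sqrt_pos.mpr (lt_of_le_of_ne (Vv_nonneg v t) (Ne.symm h))
lemma Sv_eq_zero (v : ℕ → ℝ) (t : ℕ) (h : Vv v t = 0) : Sv v t = 0 := by
  apply Finset.sum_eq_zero
  intro i hi
  have h2 := (Finset.sum_eq_zero_iff_of_nonneg (fun i _ => sq_nonneg (v i))).mp h i hi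
  exact pow_eq_zero_iff (two_ne_zero) |>.mp h2

lemma Delta_eq {α : ℝ} {v Δ : ℕ → ℝ} (hΔ0 : Δ 0 = 0)
    (hΔ : ∀ t, 1 ≤ t →
      Δ t = if (∑ s ∈ Finset.Icc 1 t, (v s) ^ 2) = 0 then 0
        else -α * (∑ s ∈ Finset.Icc 1 t, v s) / Real.sqrt (∑ s ∈ Finset.Icc 1 t, (v s) ^ 2)) :
    ∀ t, Δ t = if Vv v t = 0 then 0 else -α * Sv v t / Hv v t := by
  intro t
  cases t with
  | zero => simp [hΔ0, Vv_zero]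
  | succ n => simpa [Vv, Sv, Hv] using hΔ (n+1) (Nat.succ_le_succ (Nat.zero_le n))

lemma Fv_min {α : ℝ} (hα : 0 < α) {v Δ : ℕ → ℝ}
    (hd : ∀ t, Δ t = if Vv v t = 0 then 0 else -α * Sv v t / Hv v t) (t : ℕ) (x : ℝ) :
    Fv α v t (Δ t) ≤ Fv α v t x := by
  by_cases h : Vv v t = 0
  · have hS := Sv_eq_zero v t h
    have hH : Hv v t = 0 := by simp [Hv, h]
    simp [Fv, hS, hH]
  · have hH := Hv_pos v t h
    have hΔt : Δ t = -α * Sv v t / Hv v t := by rw [hd t, if_neg h]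
    have key : Fv α v t x - Fv α v t (Δ t) = Hv v t * (x - Δ t) ^ 2 / (2 * α) := by
      rw [hΔt]; unfold Fv; field_simp; ring
    have hnn : 0 ≤ Hv v t * (x - Δ t) ^ 2 / (2 * α) := by positivity
    linarith

lemma ident {α : ℝ} {v Δ : ℕ → ℝ} (hΔ0 : Δ 0 = 0) :
    ∀ n, ∑ t ∈ Finset.Icc 1 n, v t * Δ (t-1)
      = (∑ t ∈ Finset.Icc 1 n, (Fv α v t (Δ (t-1)) - Fv α v t (Δ t)
          - (Hv v t - Hv v (t-1)) * (Δ (t-1)) ^ 2 / (2*α))) + Fv α v n (Δ n) := by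
  intro n
  induction n with
  | zero => simp [Fv, Hv_zero, Sv_zero, hΔ0]
  | succ k ih =>
      rw [Finset.sum_Icc_succ_top (Nat.succ_le_succ (Nat.zero_le k)),
          Finset.sum_Icc_succ_top (Nat.succ_le_succ (Nat.zero_le k)), ih]
      simp only [Nat.add_sub_cancel]
      have hS : Sv v (k+1) = Sv v k + v (k+1) := Sv_succ v k
      unfold Fv
      rw [hS]
      ring

lemma telescope (v : ℕ → ℝ) : ∀ n, ∑ t ∈ Finset.Icc 1 n, (Hv v t - Hv v (t-1)) = Hv v n := by
  intro n
  induction n with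
  | zero => simp [Hv_zero]
  | succ k ih =>
      rw [Finset.sum_Icc_succ_top (Nat.succ_le_succ (Nat.zero_le k)), ih]
      simp only [Nat.add_sub_cancel]
      ring

lemma extra_aux (v : ℕ → ℝ) : ∀ n, ∃ m, m ≤ n ∧
    (m = 0 ∨ (1 ≤ m ∧ Vv v (m-1) < v m ^ 2)) ∧
    (∑ t ∈ Finset.Icc 1 n, (if Vv v (t-1) < v t ^ 2 then Hv v t - Hv v (t-1) else 0)) ≤ Hv v m := by
  intro n
  induction n with
  | zero => exact ⟨0, le_refl 0, Or.inl rfl, by simp [Hv_zero]⟩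
  | succ k ih =>
      obtain ⟨m, hm, hprop, hsum⟩ := ih
      by_cases hc : Vv v k < v (k+1) ^ 2
      · refine ⟨k+1, le_refl _, Or.inr ⟨Nat.succ_le_succ (Nat.zero_le k), by simpa using hc⟩, ?_⟩
        rw [Finset.sum_Icc_succ_top (Nat.succ_le_succ (Nat.zero_le k))]
        simp only [Nat.add_sub_cancel]
        rw [if_pos hc]
        have h1 := Hv_mono v hm
        linarith
      · refine ⟨m, hm.trans (Nat.le_succ k), hprop, ?_⟩
        rw [Finset.sum_Icc_succ_top (Nat.succ_le_succ (Nat.zero_le k))]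
        simp only [Nat.add_sub_cancel]
        rw [if_neg hc]
        linarith

lemma extra_le {L : ℝ} (v : ℕ → ℝ) (T : ℕ) (hL0 : 0 ≤ L)
    (hL : ∀ t, 1 ≤ t → t ≤ T → |v t| ≤ L) :
    (∑ t ∈ Finset.Icc 1 T, (if Vv v (t-1) < v t ^ 2 then Hv v t - Hv v (t-1) else 0))
      ≤ Real.sqrt 2 * L := by
  obtain ⟨m, hm, hprop, hsum⟩ := extra_aux v T
  rcases hprop with h0 | ⟨h1, hbad⟩
  · rw [h0, Hv_zero] at hsum
    exact hsum.trans (by positivity)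
  · refine hsum.trans ?_
    have hVm : Vv v m = Vv v (m-1) + v m ^ 2 := by
      obtain ⟨k, rfl⟩ : ∃ k, m = k + 1 := ⟨m - 1, (Nat.succ_pred_eq_of_pos h1).symm⟩
      simpa using Vv_succ v k
    have hvL : |v m| ≤ L := hL m h1 hm
    have h2 : Vv v m ≤ 2 * v m ^ 2 := by linarith
    calc Hv v m = Real.sqrt (Vv v m) := rfl
      _ ≤ Real.sqrt (2 * v m ^ 2) := Real.sqrt_le_sqrt h2
      _ = Real.sqrt 2 * |v m| := by rw [Real.sqrt_mul (by norm_num), Real.sqrt_sq_eq_abs]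
      _ ≤ Real.sqrt 2 * L := by
          exact mul_le_mul_of_nonneg_left hvL (Real.sqrt_nonneg 2)

set_option maxHeartbeats 1000000 in
lemma step_bound {α D : ℝ} (hα : 0 < α) (hD0 : 0 ≤ D) {v Δ : ℕ → ℝ}
    (hd : ∀ t, Δ t = if Vv v t = 0 then 0 else -α * Sv v t / Hv v t)
    (n : ℕ) (hDb : |Δ n| ≤ D) :
    Fv α v (n+1) (Δ n) - Fv α v (n+1) (Δ (n+1))
      - (Hv v (n+1) - Hv v n) * (Δ n) ^ 2 / (2*α)
    ≤ Real.sqrt 2 * α * (Hv v (n+1) - Hv v n)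
      + (if Vv v n < v (n+1) ^ 2 then D * (Hv v (n+1) - Hv v n) else 0) := by
  have hmono : Hv v n ≤ Hv v (n+1) := Hv_mono v (Nat.le_succ n)
  have hs2 : Real.sqrt 2 ^ 2 = 2 := Real.sq_sqrt (by norm_num)
  have hs2ge : (1:ℝ) ≤ Real.sqrt 2 := by
    rw [show (1:ℝ) = Real.sqrt 1 by simp]
    exact Real.sqrt_le_sqrt (by norm_num)
  by_cases hV2 : Vv v (n+1) = 0
  · have hVn : Vv v n = 0 :=
      le_antisymm (hV2 ▸ Vv_mono v (Nat.le_succ n)) (Vv_nonneg v n)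
    have hv0 : v (n+1) ^ 2 = 0 := by
      have h := Vv_succ v n; rw [hV2, hVn] at h; linarith
    have hΔn : Δ n = 0 := by rw [hd n, if_pos hVn]
    have hΔn1 : Δ (n+1) = 0 := by rw [hd (n+1), if_pos hV2]
    have hH2 : Hv v (n+1) = 0 := by simp [Hv, hV2]
    have hh : Hv v n = 0 := by simp [Hv, hVn]
    rw [if_neg (by rw [hVn, hv0]; exact lt_irrefl 0)]
    simp [Fv, hΔn, hΔn1, hH2, hh]
  · by_cases hVn : Vv v n = 0
    · -- first active step
      have hh : Hv v n = 0 := by simp [Hv, hVn]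
      have hΔn : Δ n = 0 := by rw [hd n, if_pos hVn]
      have hSn : Sv v n = 0 := Sv_eq_zero v n hVn
      have hH2pos : 0 < Hv v (n+1) := Hv_pos v (n+1) hV2
      have hH2sq : Hv v (n+1) ^ 2 = Vv v (n+1) := Hv_sq v (n+1)
      have hv2 : v (n+1) ^ 2 = Vv v (n+1) := by
        have h := Vv_succ v n; rw [hVn] at h; linarith
      have hw2 : v (n+1) ^ 2 = Hv v (n+1) ^ 2 := by rw [hv2, hH2sq]
      have hS2 : Sv v (n+1) = v (n+1) := by rw [Sv_succ, hSn, zero_add]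
      have hΔ2 : Δ (n+1) = -α * v (n+1) / Hv v (n+1) := by
        rw [hd (n+1), if_neg hV2, hS2]
      have hcond : Vv v n < v (n+1) ^ 2 := by
        rw [hVn, hv2]
        exact lt_of_le_of_ne (Vv_nonneg v (n+1)) (Ne.symm hV2)
      rw [if_pos hcond]
      have hLHS : Fv α v (n+1) (Δ n) - Fv α v (n+1) (Δ (n+1))
          - (Hv v (n+1) - Hv v n) * (Δ n) ^ 2 / (2*α)
          = α * (v (n+1)) ^ 2 / (2 * Hv v (n+1)) := by
        rw [hΔn, hΔ2, hh]; unfold Fv; rw [hS2]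
        field_simp
        ring
      rw [hLHS, hw2, hh, sub_zero]
      rw [div_le_iff₀ (by linarith : (0:ℝ) < 2 * Hv v (n+1))]
      nlinarith [mul_nonneg (mul_nonneg (sub_nonneg.mpr hs2ge) hα.le) (sq_nonneg (Hv v (n+1))),
        mul_nonneg (mul_nonneg hD0 hH2pos.le) hH2pos.le,
        mul_nonneg hα.le (sq_nonneg (Hv v (n+1)))]
    · -- general step
      have hhpos : 0 < Hv v n := Hv_pos v n hVn
      have hH2pos : 0 < Hv v (n+1) := lt_of_lt_of_le hhpos hmono
      have hhsq : Hv v n ^ 2 = Vv v n := Hv_sq v n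
      have hH2sq : Hv v (n+1) ^ 2 = Vv v (n+1) := Hv_sq v (n+1)
      have hVsucc : Vv v (n+1) = Vv v n + v (n+1) ^ 2 := Vv_succ v n
      have hS2 : Sv v (n+1) = Sv v n + v (n+1) := Sv_succ v n
      have hΔn : Δ n = -α * Sv v n / Hv v n := by rw [hd n, if_neg hVn]
      have hΔ2 : Δ (n+1) = -α * Sv v (n+1) / Hv v (n+1) := by rw [hd (n+1), if_neg hV2]
      set h := Hv v n with hhdef
      set H2 := Hv v (n+1) with hH2def
      set s := Sv v n with hsdef
      set w := v (n+1) with hwdef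
      have hrel : H2 ^ 2 = h ^ 2 + w ^ 2 := by rw [hH2sq, hhsq]; exact hVsucc
      have hd0 : (0:ℝ) ≤ H2 - h := sub_nonneg.mpr hmono
      have hfact : w^2 = (H2 - h) * (H2 + h) := by linear_combination -hrel
      have hLHS : Fv α v (n+1) (Δ n) - Fv α v (n+1) (Δ (n+1))
          - (H2 - h) * (Δ n) ^ 2 / (2*α)
          = α * (w^2 - 2*w*(s/h)*(H2-h) - (s/h)^2*(H2-h)*h) / (2*H2) := by
        rw [hΔn, hΔ2]; unfold Fv; rw [hS2]
        field_simp
        ring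
      rw [hLHS]
      by_cases hcond : Vv v n < w ^ 2
      · -- bad step
        rw [if_pos hcond]
        have hax : α * (s/h) = -Δ n := by rw [hΔn]; field_simp
        have hxb : |α * (s/h)| ≤ D := by rw [hax, abs_neg]; exact hDb
        have hwH2 : |w| ≤ H2 := by
          have h1 : w^2 ≤ Vv v (n+1) := by
            have e2 := Vv_nonneg v n
            linarith [hVsucc]
          calc |w| = Real.sqrt (w^2) := (Real.sqrt_sq_eq_abs w).symm
            _ ≤ Real.sqrt (Vv v (n+1)) := Real.sqrt_le_sqrt h1
            _ = H2 := rfl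
        have hwx : -(w * (α * (s/h))) ≤ H2 * D := by
          calc -(w * (α * (s/h))) ≤ |w * (α * (s/h))| := neg_le_abs _
            _ = |w| * |α * (s/h)| := abs_mul _ _
            _ ≤ H2 * D := mul_le_mul hwH2 hxb (abs_nonneg _) hH2pos.le
        rw [div_le_iff₀ (by linarith : (0:ℝ) < 2*H2)]
        have e1 : α * ((H2 - h) * (H2 + h)) ≤ Real.sqrt 2 * α * (H2 - h) * (2 * H2) := by
          nlinarith [mul_nonneg (mul_nonneg hα.le hd0) hhpos.le,
            mul_nonneg (mul_nonneg (mul_nonneg (sub_nonneg.mpr hs2ge) hα.le) hd0) hH2pos.le,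
            mul_nonneg (mul_nonneg hα.le hd0) hH2pos.le]
        have e2 : α * (-2*w*(s/h)*(H2-h)) ≤ 2 * H2 * D * (H2 - h) := by
          have e := mul_le_mul_of_nonneg_right hwx hd0
          nlinarith [e]
        have e3 : α * (-(s/h)^2*(H2-h)*h) ≤ 0 := by
          have e : (0:ℝ) ≤ (s/h)^2*(H2-h)*h :=
            mul_nonneg (mul_nonneg (sq_nonneg _) hd0) hhpos.le
          nlinarith [e]
        calc α * (w^2 - 2*w*(s/h)*(H2-h) - (s/h)^2*(H2-h)*h)
            = α * ((H2-h)*(H2+h)) + α * (-2*w*(s/h)*(H2-h)) + α * (-(s/h)^2*(H2-h)*h) := by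
              rw [← hfact]; ring
          _ ≤ Real.sqrt 2 * α * (H2 - h) * (2*H2) + 2*H2*D*(H2-h) + 0 := by
              linarith
          _ = (Real.sqrt 2 * α * (H2 - h) + D * (H2 - h)) * (2 * H2) := by ring
      · -- good step
        rw [if_neg hcond, add_zero]
        have hwh : w^2 ≤ h^2 := by rw [hhsq]; exact not_lt.mp hcond
        have hA : (w^2 - 2*w*(s/h)*(H2-h) - (s/h)^2*(H2-h)*h) * h ≤ w^2 * H2 := by
          have hid : (w^2 - 2*w*(s/h)*(H2-h) - (s/h)^2*(H2-h)*h) * h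
              + (H2 - h) * (w + (s/h)*h)^2 = w^2 * H2 := by
            field_simp
            ring
          nlinarith [mul_nonneg hd0 (sq_nonneg (w + (s/h)*h))]
        have step1 : α * (w^2 - 2*w*(s/h)*(H2-h) - (s/h)^2*(H2-h)*h) / (2*H2)
            ≤ α * w^2 / (2*h) := by
          rw [div_le_div_iff₀ (by linarith : (0:ℝ) < 2*H2) (by linarith : (0:ℝ) < 2*h)]
          nlinarith [mul_le_mul_of_nonneg_left hA (by linarith : (0:ℝ) ≤ 2*α)]
        have hH2le : H2 ≤ Real.sqrt 2 * h := by
          have h1 : Vv v (n+1) ≤ 2 * Vv v n := by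
            have e3 := hhsq
            linarith [hVsucc, hwh]
          calc H2 = Real.sqrt (Vv v (n+1)) := rfl
            _ ≤ Real.sqrt (2 * Vv v n) := Real.sqrt_le_sqrt h1
            _ = Real.sqrt 2 * h := by
                rw [Real.sqrt_mul (by norm_num)]; rfl
        have step2 : α * w^2 / (2*h) ≤ Real.sqrt 2 * α * (H2 - h) := by
          rw [div_le_iff₀ (by linarith : (0:ℝ) < 2*h)]
          rw [hfact]
          have h2s : H2 + h ≤ 2 * Real.sqrt 2 * h := by
            nlinarith [mul_le_mul_of_nonneg_right hs2ge hhpos.le]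
          nlinarith [mul_nonneg hα.le hd0, h2s]
        linarith

theorem stmt_6 (α : ℝ) (hα : 0 < α) (T : ℕ) (hT : 1 ≤ T) (v : ℕ → ℝ) (u : ℝ)
    (Δ : ℕ → ℝ) (hΔ0 : Δ 0 = 0)
    (hΔ : ∀ t, 1 ≤ t →
      Δ t = if (∑ s ∈ Finset.Icc 1 t, (v s) ^ 2) = 0 then 0
        else -α * (∑ s ∈ Finset.Icc 1 t, v s) / Real.sqrt (∑ s ∈ Finset.Icc 1 t, (v s) ^ 2)) :
    ∑ t ∈ Finset.Icc 1 T, v t * (Δ (t - 1) - u)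
      ≤ (u ^ 2 / (2 * α) + Real.sqrt 2 * α) * Real.sqrt (∑ t ∈ Finset.Icc 1 T, (v t) ^ 2)
        + 2 * ((Finset.Icc 1 T).sup' (Finset.nonempty_Icc.mpr hT) fun t => |Δ t|)
            * ((Finset.Icc 1 T).sup' (Finset.nonempty_Icc.mpr hT) fun t => |v t|) := by
  set D := (Finset.Icc 1 T).sup' (Finset.nonempty_Icc.mpr hT) fun t => |Δ t| with hDdef
  set L := (Finset.Icc 1 T).sup' (Finset.nonempty_Icc.mpr hT) fun t => |v t| with hLdef
  have hd : ∀ t, Δ t = if Vv v t = 0 then 0 else -α * Sv v t / Hv v t := Delta_eq hΔ0 hΔ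
  have hTmem : T ∈ Finset.Icc 1 T := Finset.mem_Icc.mpr ⟨hT, le_refl T⟩
  have hD0 : 0 ≤ D := by
    rw [hDdef]
    exact le_trans (abs_nonneg (Δ T)) (Finset.le_sup' (fun t => |Δ t|) hTmem)
  have hL0 : 0 ≤ L := by
    rw [hLdef]
    exact le_trans (abs_nonneg (v T)) (Finset.le_sup' (fun t => |v t|) hTmem)
  have hDbk : ∀ k, k + 1 ≤ T → |Δ k| ≤ D := by
    intro k hk
    rcases Nat.eq_zero_or_pos k with rfl | hk1
    · simpa [hΔ0] using hD0
    · rw [hDdef]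
      exact Finset.le_sup' (fun t => |Δ t|) (Finset.mem_Icc.mpr ⟨hk1, by omega⟩)
  have hLb : ∀ t, 1 ≤ t → t ≤ T → |v t| ≤ L := by
    intro t h1 h2
    rw [hLdef]
    exact Finset.le_sup' (fun t => |v t|) (Finset.mem_Icc.mpr ⟨h1, h2⟩)
  have e1 : ∑ t ∈ Finset.Icc 1 T, v t * (Δ (t - 1) - u)
      = (∑ t ∈ Finset.Icc 1 T, v t * Δ (t - 1)) - Sv v T * u := by
    simp only [mul_sub]
    rw [Finset.sum_sub_distrib, ← Finset.sum_mul]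
    rfl
  have e2 := ident (α := α) (v := v) (Δ := Δ) hΔ0 T
  have e3 : ∑ t ∈ Finset.Icc 1 T, (Fv α v t (Δ (t-1)) - Fv α v t (Δ t)
        - (Hv v t - Hv v (t-1)) * (Δ (t-1)) ^ 2 / (2*α))
      ≤ ∑ t ∈ Finset.Icc 1 T, (Real.sqrt 2 * α * (Hv v t - Hv v (t-1))
        + D * (if Vv v (t-1) < v t ^ 2 then Hv v t - Hv v (t-1) else 0)) := by
    apply Finset.sum_le_sum
    intro t ht
    rw [Finset.mem_Icc] at ht
    obtain ⟨k, rfl⟩ : ∃ k, t = k + 1 := ⟨t - 1, by omega⟩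
    simp only [Nat.add_sub_cancel]
    have hb := step_bound hα hD0 hd k (hDbk k ht.2)
    simpa [mul_ite, mul_zero] using hb
  have e4 : ∑ t ∈ Finset.Icc 1 T, (Real.sqrt 2 * α * (Hv v t - Hv v (t-1))
        + D * (if Vv v (t-1) < v t ^ 2 then Hv v t - Hv v (t-1) else 0))
      ≤ Real.sqrt 2 * α * Hv v T + D * (Real.sqrt 2 * L) := by
    rw [Finset.sum_add_distrib, ← Finset.mul_sum, ← Finset.mul_sum, telescope v T]
    have := extra_le v T hL0 hLb
    have hsa : (0:ℝ) ≤ Real.sqrt 2 * α := by positivity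
    gcongr
  have e5 : Fv α v T (Δ T) ≤ Fv α v T u := Fv_min hα hd T u
  have e6 : Fv α v T u = Hv v T * u ^ 2 / (2 * α) + Sv v T * u := rfl
  have hs2le : Real.sqrt 2 ≤ 2 := by
    nlinarith [Real.sq_sqrt (by norm_num : (0:ℝ) ≤ 2), sq_nonneg (Real.sqrt 2 - 2)]
  have hfinal : ∑ t ∈ Finset.Icc 1 T, v t * (Δ (t - 1) - u)
      ≤ (u ^ 2 / (2 * α) + Real.sqrt 2 * α) * Hv v T + 2 * D * L := by
    rw [e1, e2]
    have hHnn := Hv_nonneg v T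
    have h8 : Real.sqrt 2 * L * D ≤ 2 * D * L := by
      nlinarith [mul_nonneg (mul_nonneg (sub_nonneg.mpr hs2le) hD0) hL0]
    have h7 : Hv v T * u ^ 2 / (2 * α) = u ^ 2 / (2 * α) * Hv v T := by ring
    linarith [e3, e4, e5, e6.le, h7, h8]
  exact hfinal
end

section
/- Discounted regret of β-FTRL: for all T > 0, any loss sequence v_1,...,v_T, and any comparator u ∈ ℝ, the iterates Δ_0 = 0 and Δ_t = -α (∑_{s=1}^t β^{t-s} v_s)/√(∑_{s=1}^t (β^{t-s} v_s)^2) (set to 0 when the denominator vanishes) satisfy ∑_{t=1}^T β^{T-t} v_t (Δ_{t-1} - u) ≤ (u^2/(2α) + √2 α) √(∑_{t=1}^T (β^{T-t} v_t)^2) + 2 (max_{t∈[1,T]} |Δ_t|)(max_{t∈[1,T]} |β^{T-t} v_t|). -/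
open Finset


private lemma telescope_sum (f : ℕ → ℝ) : ∀ n : ℕ,
    ∑ t ∈ Finset.Icc 1 n, (f t - f (t - 1)) = f n - f 0
  | 0 => by simp
  | (n + 1) => by
      rw [Finset.sum_Icc_succ_top (by omega : 1 ≤ n + 1), telescope_sum f n]
      simp only [Nat.add_sub_cancel]
      ring


private lemma step_bound_s7 (α M a b p q Dp Dn : ℝ)
    (hα : 0 < α) (hM0 : 0 ≤ M)
    (hp : 0 ≤ p) (hpq : p ≤ q) (hq2 : q ^ 2 = p ^ 2 + b ^ 2)
    (ha0 : p = 0 → a = 0)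
    (hDp : Dp = if p = 0 then 0 else -α * a / p)
    (hDn : Dn = if q = 0 then 0 else -α * (a + b) / q)
    (hMa : |Dp| ≤ M) :
    b * Dp + (a * Dp + p * Dp ^ 2 / (2 * α)) - ((a + b) * Dn + q * Dn ^ 2 / (2 * α))
      ≤ Real.sqrt 2 * α * (q - p) + M * (if p ^ 2 < b ^ 2 then q - p else 0) := by
  have hs1 : (1:ℝ) ≤ Real.sqrt 2 := by
    rw [show (1:ℝ) = Real.sqrt 1 by simp]
    exact Real.sqrt_le_sqrt (by norm_num)
  by_cases hp0 : p = 0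
  · have ha : a = 0 := ha0 hp0
    subst ha; subst hp0
    by_cases hq0 : q = 0
    · have hb : b = 0 := by nlinarith [sq_nonneg b]
      subst hb; subst hq0
      simp [hDp, hDn]
    · have hq0' : 0 < q := lt_of_le_of_ne hpq (Ne.symm hq0)
      rw [hDp, hDn, if_pos rfl, if_neg hq0]
      have hb2 : b ^ 2 = q ^ 2 := by linarith
      have hbad : (0:ℝ) ^ 2 < b ^ 2 := by nlinarith
      rw [if_pos hbad]
      have key : b * 0 + (0 * 0 + 0 * (0:ℝ) ^ 2 / (2 * α))
          - ((0 + b) * (-α * (0 + b) / q) + q * (-α * (0 + b) / q) ^ 2 / (2 * α))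
          = α * b ^ 2 / (2 * q) := by
        field_simp
        ring
      rw [key, hb2]
      have key2 : α * q ^ 2 / (2 * q) = α * q / 2 := by
        field_simp
      rw [key2]
      nlinarith [mul_pos hα hq0', mul_nonneg hM0 hq0'.le,
        mul_le_mul_of_nonneg_right (mul_le_mul_of_nonneg_right hs1 hα.le) hq0'.le]
  · have hp0' : 0 < p := lt_of_le_of_ne hp (Ne.symm hp0)
    have hq0' : 0 < q := lt_of_lt_of_le hp0' hpq
    rw [if_neg hp0] at hDp
    rw [if_neg (ne_of_gt hq0')] at hDn
    subst hDp; subst hDn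
    have hMa' : α * |a| ≤ M * p := by
      have h1 : |(-α * a / p)| = α * |a| / p := by
        rw [abs_div, abs_of_pos hp0', abs_mul, abs_neg, abs_of_pos hα]
      rw [h1] at hMa
      exact (div_le_iff₀ hp0').1 hMa
    have hterm : b * (-α * a / p) + (a * (-α * a / p) + p * (-α * a / p) ^ 2 / (2 * α))
        - ((a + b) * (-α * (a + b) / q) + q * (-α * (a + b) / q) ^ 2 / (2 * α))
        = α * (b ^ 2 * q - (q - p) * (a + b) ^ 2) / (2 * p * q) := by
      field_simp
      ring
    rw [hterm]
    have h3 : 0 ≤ q - p := sub_nonneg.2 hpq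
    by_cases hbad : p ^ 2 < b ^ 2
    · rw [if_pos hbad, div_le_iff₀ (by positivity)]
      have h2 : |b| ≤ q := by
        rw [← Real.sqrt_sq_eq_abs, ← Real.sqrt_sq hq0'.le]
        exact Real.sqrt_le_sqrt (by nlinarith)
      have h1' : -(a * b) ≤ |a| * |b| := by
        rw [← abs_mul]; exact neg_le_abs _
      have h5 : α * |a| * |b| ≤ M * p * q :=
        mul_le_mul hMa' h2 (abs_nonneg b) (by positivity)
      have h6 : α * (-(a * b)) ≤ M * (p * q) := by
        have := mul_le_mul_of_nonneg_left h1' hα.le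
        linarith [h5, this]
      have h7 := mul_le_mul_of_nonneg_right h6 h3
      have c3 : -2 * α * (q - p) * (a * b) ≤ 2 * M * p * q * (q - p) := by linarith [h7]
      have c2 : 0 ≤ α * (q - p) * a ^ 2 :=
        mul_nonneg (mul_nonneg hα.le h3) (sq_nonneg a)
      have c1 : α * p * b ^ 2 ≤ 2 * α * p * q * (q - p) := by
        have h12 : α * p * b ^ 2 = α * p * (q - p) * (q + p) := by
          rw [show b ^ 2 = q ^ 2 - p ^ 2 by linarith]; ring
        have h12b : 0 ≤ α * p * (q - p) * (q - p) :=
          mul_nonneg (mul_nonneg (mul_nonneg hα.le hp) h3) h3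
        linarith [h12, h12b]
      have c4 : 2 * α * p * q * (q - p) ≤ 2 * Real.sqrt 2 * α * p * q * (q - p) := by
        have hX : (0:ℝ) ≤ 2 * α * p * q * (q - p) :=
          mul_nonneg (mul_nonneg (mul_nonneg (mul_nonneg (by norm_num) hα.le) hp) hq0'.le) h3
        have := mul_le_mul_of_nonneg_right hs1 hX
        linarith [this]
      have hN : α * (b ^ 2 * q - (q - p) * (a + b) ^ 2)
          = α * p * b ^ 2 - α * (q - p) * a ^ 2 + (-2 * α * (q - p) * (a * b)) := by
        ring
      have hR : (Real.sqrt 2 * α * (q - p) + M * (q - p)) * (2 * p * q)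
          = 2 * Real.sqrt 2 * α * p * q * (q - p) + 2 * M * p * q * (q - p) := by ring
      rw [hN, hR]
      linarith [c1, c2, c3, c4]
    · rw [if_neg hbad, mul_zero, add_zero, div_le_iff₀ (by positivity)]
      have hble : b ^ 2 ≤ p ^ 2 := not_lt.1 hbad
      have hqsp : q ≤ Real.sqrt 2 * p := by
        have e1 : q = Real.sqrt (q ^ 2) := (Real.sqrt_sq hq0'.le).symm
        have e2 : Real.sqrt 2 * p = Real.sqrt (2 * p ^ 2) := by
          rw [Real.sqrt_mul (by norm_num), Real.sqrt_sq hp]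
        rw [e1, e2]
        exact Real.sqrt_le_sqrt (by nlinarith)
      have h6 : q + p ≤ 2 * Real.sqrt 2 * p := by
        have : p ≤ Real.sqrt 2 * p := by
          have := mul_le_mul_of_nonneg_right hs1 hp
          linarith
        linarith [hqsp]
      have c1g : 0 ≤ α * (q - p) * (a + b) ^ 2 :=
        mul_nonneg (mul_nonneg hα.le h3) (sq_nonneg (a + b))
      have h13 : α * q * b ^ 2 = α * q * (q - p) * (q + p) := by
        rw [show b ^ 2 = q ^ 2 - p ^ 2 by linarith]; ring
      have h14 := mul_le_mul_of_nonneg_left h6 (mul_nonneg (mul_nonneg hα.le hq0'.le) h3)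
      have hN : α * (b ^ 2 * q - (q - p) * (a + b) ^ 2)
          = α * q * b ^ 2 - α * (q - p) * (a + b) ^ 2 := by ring
      have hR : Real.sqrt 2 * α * (q - p) * (2 * p * q)
          = α * q * (q - p) * (2 * Real.sqrt 2 * p) := by ring
      rw [hN, hR, h13]
      linarith [c1g, h14]

set_option maxHeartbeats 1000000 in
private lemma sf_core (α M μ u : ℝ) (hα : 0 < α) (hM0 : 0 ≤ M) (hμ0 : 0 ≤ μ) (T : ℕ)
    (g G H Δ : ℕ → ℝ)
    (hG0 : G 0 = 0) (hH0 : H 0 = 0)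
    (hGrec : ∀ k, G (k + 1) = G k + g (k + 1))
    (hHrec : ∀ k, H (k + 1) = H k + g (k + 1) ^ 2)
    (hΔ : ∀ t, t ≤ T → Δ t = if H t = 0 then 0 else -α * G t / Real.sqrt (H t))
    (hM : ∀ t, t ≤ T → |Δ t| ≤ M)
    (hμ : ∀ t, 1 ≤ t → t ≤ T → |g t| ≤ μ) :
    ∑ t ∈ Finset.Icc 1 T, g t * (Δ (t - 1) - u)
      ≤ (u ^ 2 / (2 * α) + Real.sqrt 2 * α) * Real.sqrt (H T) + 2 * M * μ := by
  have hHnn : ∀ t, 0 ≤ H t := by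
    intro t
    induction t with
    | zero => rw [hH0]
    | succ k ih => rw [hHrec]; nlinarith [sq_nonneg (g (k + 1))]
  set L : ℕ → ℝ := fun t => Real.sqrt (H t) with hLdef
  have hLval : ∀ t, L t = Real.sqrt (H t) := fun t => rfl
  have hLnn : ∀ t, 0 ≤ L t := fun t => Real.sqrt_nonneg _
  have hLsq : ∀ t, L t ^ 2 = H t := fun t => Real.sq_sqrt (hHnn t)
  have hL0 : L 0 = 0 := by rw [hLval, hH0, Real.sqrt_zero]
  have hLz : ∀ t, H t = 0 → L t = 0 := by
    intro t h; rw [hLval, h, Real.sqrt_zero]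
  have hLpos : ∀ t, H t ≠ 0 → 0 < L t := by
    intro t h
    rw [hLval]
    exact Real.sqrt_pos.2 (lt_of_le_of_ne (hHnn t) (Ne.symm h))
  have hLmono : ∀ k, L k ≤ L (k + 1) := by
    intro k
    apply Real.sqrt_le_sqrt
    rw [hHrec]; nlinarith [sq_nonneg (g (k + 1))]
  have hLmono' : ∀ t, 1 ≤ t → L (t - 1) ≤ L t := by
    intro t ht
    obtain ⟨k, rfl⟩ : ∃ k, t = k + 1 := ⟨t - 1, by omega⟩
    simpa using hLmono k
  have hGzero : ∀ t, H t = 0 → G t = 0 := by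
    intro t
    induction t with
    | zero => intro _; exact hG0
    | succ k ih =>
        intro h
        rw [hHrec] at h
        have h1 : H k = 0 := by nlinarith [hHnn k, sq_nonneg (g (k + 1))]
        have h2 : g (k + 1) = 0 := by
          have : g (k + 1) ^ 2 = 0 := by nlinarith [hHnn k, sq_nonneg (g (k + 1))]
          exact pow_eq_zero_iff (by norm_num) |>.1 this
        rw [hGrec, ih h1, h2]; ring
  have hΔ' : ∀ t, t ≤ T → Δ t = if L t = 0 then 0 else -α * G t / L t := by
    intro t ht
    rw [hΔ t ht]
    by_cases h : H t = 0
    · rw [if_pos h, if_pos (hLz t h)]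
    · rw [if_neg h, if_neg (ne_of_gt (hLpos t h)), hLval]
  have hΔ0 : Δ 0 = 0 := by rw [hΔ 0 (Nat.zero_le T), if_pos hH0]
  set f : ℕ → ℝ := fun t => G t * Δ t + L t * Δ t ^ 2 / (2 * α) with hfdef
  have hfval : ∀ t, f t = G t * Δ t + L t * Δ t ^ 2 / (2 * α) := fun t => rfl
  have hf0 : f 0 = 0 := by rw [hfval, hΔ0, hG0]; ring
  have hGsum : ∀ n : ℕ, ∑ t ∈ Finset.Icc 1 n, g t = G n := by
    intro n
    induction n with
    | zero => simp [hG0]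
    | succ k ih => rw [Finset.sum_Icc_succ_top (by omega : 1 ≤ k + 1), ih, hGrec]
  have tele : ∑ t ∈ Finset.Icc 1 T, (f t - f (t - 1)) = f T - f 0 := telescope_sum f T
  have hs1 : ∑ t ∈ Finset.Icc 1 T, g t * (Δ (t - 1) - u) + G T * u
      = ∑ t ∈ Finset.Icc 1 T, g t * Δ (t - 1) := by
    rw [← hGsum T, Finset.sum_mul, ← Finset.sum_add_distrib]
    exact Finset.sum_congr rfl fun t _ => by ring
  have hs2 : ∑ t ∈ Finset.Icc 1 T, (g t * Δ (t - 1) - (f t - f (t - 1)))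
        + ∑ t ∈ Finset.Icc 1 T, (f t - f (t - 1))
      = ∑ t ∈ Finset.Icc 1 T, g t * Δ (t - 1) := by
    rw [← Finset.sum_add_distrib]
    exact Finset.sum_congr rfl fun t _ => by ring
  -- minimality at T against comparator u
  have hmin : f T ≤ G T * u + L T * u ^ 2 / (2 * α) := by
    by_cases h : H T = 0
    · have hGT := hGzero T h
      have hLT := hLz T h
      have hΔT : Δ T = 0 := by rw [hΔ T le_rfl, if_pos h]
      rw [hfval, hGT, hLT, hΔT]
      ring_nf
      exact le_refl 0
    · have hLT : 0 < L T := hLpos T h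
      have hΔT : Δ T = -α * G T / L T := by
        rw [hΔ' T le_rfl, if_neg (ne_of_gt hLT)]
      have key : (G T * u + L T * u ^ 2 / (2 * α)) - f T
          = (L T * u + α * G T) ^ 2 / (2 * α * L T) := by
        rw [hfval, hΔT]; field_simp; ring
      nlinarith [key, div_nonneg (sq_nonneg (L T * u + α * G T))
        (by positivity : (0:ℝ) ≤ 2 * α * L T)]
  -- per-round bound
  have hstep : ∀ t ∈ Finset.Icc 1 T,
      g t * Δ (t - 1) - (f t - f (t - 1))
        ≤ Real.sqrt 2 * α * (L t - L (t - 1))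
          + M * (if H (t - 1) < g t ^ 2 then L t - L (t - 1) else 0) := by
    intro t ht
    rw [Finset.mem_Icc] at ht
    obtain ⟨k, rfl⟩ : ∃ k, t = k + 1 := ⟨t - 1, by omega⟩
    simp only [Nat.add_sub_cancel]
    have hkT : k ≤ T := by omega
    have hkT1 : k + 1 ≤ T := ht.2
    have hb := step_bound_s7 α M (G k) (g (k + 1)) (L k) (L (k + 1)) (Δ k) (Δ (k + 1))
      hα hM0 (hLnn k) (hLmono k)
      (by rw [hLsq, hLsq, hHrec])
      (fun hp => hGzero k (by rw [← hLsq k, hp]; ring))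
      (hΔ' k hkT)
      (by rw [hΔ' (k + 1) hkT1, hGrec])
      (hM k hkT)
    have hHk : H k = L k ^ 2 := (hLsq k).symm
    rw [hfval k, hfval (k + 1), hGrec, hHk]
    linarith [hb]
  -- sum the per-round bounds
  have hsum1 : ∑ t ∈ Finset.Icc 1 T, (g t * Δ (t - 1) - (f t - f (t - 1)))
      ≤ ∑ t ∈ Finset.Icc 1 T, (Real.sqrt 2 * α * (L t - L (t - 1))
          + M * (if H (t - 1) < g t ^ 2 then L t - L (t - 1) else 0)) :=
    Finset.sum_le_sum hstep
  have hsum2 : ∑ t ∈ Finset.Icc 1 T, (Real.sqrt 2 * α * (L t - L (t - 1))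
          + M * (if H (t - 1) < g t ^ 2 then L t - L (t - 1) else 0))
      = Real.sqrt 2 * α * L T
        + M * ∑ t ∈ Finset.Icc 1 T, (if H (t - 1) < g t ^ 2 then L t - L (t - 1) else 0) := by
    rw [Finset.sum_add_distrib, ← Finset.mul_sum, ← Finset.mul_sum, telescope_sum L T, hL0]
    ring
  -- the "bad rounds" sum is at most 2 μ
  have hbadsum : ∑ t ∈ Finset.Icc 1 T, (if H (t - 1) < g t ^ 2 then L t - L (t - 1) else 0)
      ≤ 2 * μ := by
    rw [Finset.sum_ite, Finset.sum_const_zero, add_zero]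
    set B := Finset.filter (fun t => H (t - 1) < g t ^ 2) (Finset.Icc 1 T) with hBdef
    rcases B.eq_empty_or_nonempty with hB | hB
    · rw [hB]; simp; positivity
    · set t₀ := B.max' hB with ht₀def
      have ht₀B : t₀ ∈ B := B.max'_mem hB
      have ht₀Icc : t₀ ∈ Finset.Icc 1 T := Finset.mem_of_mem_filter t₀ ht₀B
      have ht₀bad : H (t₀ - 1) < g t₀ ^ 2 := (Finset.mem_filter.1 ht₀B).2
      rw [Finset.mem_Icc] at ht₀Icc
      have hsub : B ⊆ Finset.Icc 1 t₀ := by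
        intro x hx
        rw [Finset.mem_Icc]
        have hxI := Finset.mem_of_mem_filter x hx
        rw [Finset.mem_Icc] at hxI
        exact ⟨hxI.1, B.le_max' x hx⟩
      have h1 : ∑ t ∈ B, (L t - L (t - 1)) ≤ ∑ t ∈ Finset.Icc 1 t₀, (L t - L (t - 1)) := by
        apply Finset.sum_le_sum_of_subset_of_nonneg hsub
        intro i hi _
        rw [Finset.mem_Icc] at hi
        exact sub_nonneg.2 (hLmono' i hi.1)
      have h2 : ∑ t ∈ Finset.Icc 1 t₀, (L t - L (t - 1)) = L t₀ := by
        rw [telescope_sum L t₀, hL0, sub_zero]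
      have hgμ : |g t₀| ≤ μ := hμ t₀ ht₀Icc.1 ht₀Icc.2
      have hgμ2 : g t₀ ^ 2 ≤ μ ^ 2 := by
        nlinarith [sq_abs (g t₀), abs_nonneg (g t₀)]
      have hLt₀ : L t₀ ^ 2 < 2 * μ ^ 2 := by
        rw [hLsq]
        obtain ⟨k, hk⟩ : ∃ k, t₀ = k + 1 := ⟨t₀ - 1, by omega⟩
        rw [hk] at ht₀bad hgμ2 ⊢
        rw [hHrec]
        simp only [Nat.add_sub_cancel] at ht₀bad
        linarith [ht₀bad, hgμ2, hHnn k]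
      have hfin : L t₀ ≤ 2 * μ := by
        nlinarith [hLnn t₀, hμ0, hLt₀]
      linarith [h1, h2, hfin]
  -- put everything together
  have hLTnn := hLnn T
  have goal_eq : (u ^ 2 / (2 * α) + Real.sqrt 2 * α) * Real.sqrt (H T)
      = L T * u ^ 2 / (2 * α) + Real.sqrt 2 * α * L T := by
    rw [← hLval]; ring
  rw [goal_eq]
  have hMμ : M * ∑ t ∈ Finset.Icc 1 T, (if H (t - 1) < g t ^ 2 then L t - L (t - 1) else 0)
      ≤ M * (2 * μ) := mul_le_mul_of_nonneg_left hbadsum hM0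
  have A1 : ∑ t ∈ Finset.Icc 1 T, g t * (Δ (t - 1) - u)
      = ∑ t ∈ Finset.Icc 1 T, (g t * Δ (t - 1) - (f t - f (t - 1))) + f T - G T * u := by
    linarith [hs1, hs2, tele, hf0]
  have A2 : ∑ t ∈ Finset.Icc 1 T, (g t * Δ (t - 1) - (f t - f (t - 1)))
      ≤ Real.sqrt 2 * α * L T
        + M * ∑ t ∈ Finset.Icc 1 T, (if H (t - 1) < g t ^ 2 then L t - L (t - 1) else 0) := by
    linarith [hsum1, hsum2]
  set S1 := ∑ t ∈ Finset.Icc 1 T, g t * (Δ (t - 1) - u) with hS1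
  set S2 := ∑ t ∈ Finset.Icc 1 T, (g t * Δ (t - 1) - (f t - f (t - 1))) with hS2
  set W := ∑ t ∈ Finset.Icc 1 T, (if H (t - 1) < g t ^ 2 then L t - L (t - 1) else 0) with hW
  clear_value S1 S2 W f L
  clear hS1 hS2 hW hs1 hs2 hsum1 hsum2 hbadsum tele hstep hΔ hΔ' hM hμ hGsum hfval hfdef hf0
  linarith [A1, A2, hmin, hMμ]

theorem stmt_7 (α β : ℝ) (hα : 0 < α) (hβ : β ∈ Set.Ioc (0:ℝ) 1)
    (T : ℕ) (hT : 1 ≤ T) (v : ℕ → ℝ) (u : ℝ)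
    (Δ : ℕ → ℝ) (hΔ0 : Δ 0 = 0)
    (hΔ : ∀ t, 1 ≤ t →
      Δ t = if (∑ s ∈ Finset.Icc 1 t, (β ^ (t - s) * v s) ^ 2) = 0 then 0
        else -α * (∑ s ∈ Finset.Icc 1 t, β ^ (t - s) * v s)
          / Real.sqrt (∑ s ∈ Finset.Icc 1 t, (β ^ (t - s) * v s) ^ 2)) :
    ∑ t ∈ Finset.Icc 1 T, β ^ (T - t) * v t * (Δ (t - 1) - u)
      ≤ (u ^ 2 / (2 * α) + Real.sqrt 2 * α)
          * Real.sqrt (∑ t ∈ Finset.Icc 1 T, (β ^ (T - t) * v t) ^ 2)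
        + 2 * ((Finset.Icc 1 T).sup' (Finset.nonempty_Icc.mpr hT) fun t => |Δ t|)
            * ((Finset.Icc 1 T).sup' (Finset.nonempty_Icc.mpr hT) fun t => |β ^ (T - t) * v t|) := by
  have hβ0 : 0 < β := hβ.1
  set g : ℕ → ℝ := fun t => β ^ (T - t) * v t with hgdef
  set M : ℝ := (Finset.Icc 1 T).sup' (Finset.nonempty_Icc.mpr hT) fun t => |Δ t| with hMdef
  set μ : ℝ := (Finset.Icc 1 T).sup' (Finset.nonempty_Icc.mpr hT) fun t => |β ^ (T - t) * v t| with hμdef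
  have hTmem : T ∈ Finset.Icc 1 T := Finset.mem_Icc.2 ⟨hT, le_rfl⟩
  have hM0 : 0 ≤ M := by
    rw [hMdef]; exact le_trans (abs_nonneg (Δ T)) (Finset.le_sup' (fun t => |Δ t|) hTmem)
  have hμ0 : 0 ≤ μ := by
    rw [hμdef]; exact le_trans (abs_nonneg (β ^ (T - T) * v T)) (Finset.le_sup' (fun t => |β ^ (T - t) * v t|) hTmem)
  have hMb : ∀ t, t ≤ T → |Δ t| ≤ M := by
    intro t ht
    rcases Nat.eq_zero_or_pos t with h0 | h0
    · rw [h0, hΔ0, abs_zero]; exact hM0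
    · rw [hMdef]; exact Finset.le_sup' (fun t => |Δ t|) (Finset.mem_Icc.2 ⟨(by omega : 1 ≤ t), ht⟩)
  have hμb : ∀ t, 1 ≤ t → t ≤ T → |g t| ≤ μ := by
    intro t h1 h2
    rw [hμdef, hgdef]
    exact Finset.le_sup' (fun t => |β ^ (T - t) * v t|) (Finset.mem_Icc.2 ⟨h1, h2⟩)
  -- Δ in terms of the rescaled losses
  have hΔ' : ∀ t, t ≤ T →
      Δ t = if (∑ s ∈ Finset.Icc 1 t, g s ^ 2) = 0 then 0
        else -α * (∑ s ∈ Finset.Icc 1 t, g s) / Real.sqrt (∑ s ∈ Finset.Icc 1 t, g s ^ 2) := by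
    intro t ht
    rcases Nat.eq_zero_or_pos t with h0 | h0
    · subst h0; simpa using hΔ0
    · have hb : (0:ℝ) < β ^ (T - t) := pow_pos hβ0 _
      have hfac : ∀ s ∈ Finset.Icc 1 t, g s = β ^ (T - t) * (β ^ (t - s) * v s) := by
        intro s hs
        rw [Finset.mem_Icc] at hs
        rw [hgdef]
        simp only
        rw [← mul_assoc, ← pow_add]
        congr 2
        omega
      have hsum1 : ∑ s ∈ Finset.Icc 1 t, g s
          = β ^ (T - t) * ∑ s ∈ Finset.Icc 1 t, β ^ (t - s) * v s := by
        rw [Finset.mul_sum]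
        exact Finset.sum_congr rfl hfac
      have hsum2 : ∑ s ∈ Finset.Icc 1 t, g s ^ 2
          = (β ^ (T - t)) ^ 2 * ∑ s ∈ Finset.Icc 1 t, (β ^ (t - s) * v s) ^ 2 := by
        rw [Finset.mul_sum]
        refine Finset.sum_congr rfl fun s hs => ?_
        rw [hfac s hs, mul_pow]
      rw [hΔ t h0, hsum1, hsum2]
      by_cases hQ : (∑ s ∈ Finset.Icc 1 t, (β ^ (t - s) * v s) ^ 2) = 0
      · rw [if_pos hQ, if_pos (by rw [hQ, mul_zero])]
      · rw [if_neg hQ, if_neg (mul_ne_zero (pow_ne_zero 2 (ne_of_gt hb)) hQ)]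
        rw [Real.sqrt_mul (sq_nonneg _), Real.sqrt_sq hb.le]
        rw [show -α * (β ^ (T - t) * ∑ s ∈ Finset.Icc 1 t, β ^ (t - s) * v s)
            = β ^ (T - t) * (-α * ∑ s ∈ Finset.Icc 1 t, β ^ (t - s) * v s) by ring]
        rw [mul_div_mul_left _ _ (ne_of_gt hb)]
  have := sf_core α M μ u hα hM0 hμ0 T g
    (fun t => ∑ s ∈ Finset.Icc 1 t, g s)
    (fun t => ∑ s ∈ Finset.Icc 1 t, g s ^ 2)
    Δ
    (by simp) (by simp)
    (fun k => Finset.sum_Icc_succ_top (by omega : 1 ≤ k + 1) _)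
    (fun k => Finset.sum_Icc_succ_top (by omega : 1 ≤ k + 1) _)
    hΔ' hMb hμb
  simpa [hgdef] using this
end

section
/- Adaptive step-size sum bound: for any real sequence v_1,...,v_T with not all among v_1,...,v_t zero for t beyond some index τ, and clipped values ṽ_{t+1} = clip_{√(∑_{s=1}^t v_s^2)}(v_{t+1}), one has ∑_{t=τ+1}^{T-1} ṽ_{t+1}^2 / √(∑_{s=1}^t v_s^2) ≤ 2√2 · √(∑_{t=1}^T v_t^2). -/
noncomputable def clip (D x : ℝ) : ℝ := x * min (D / |x|) 1

lemma tele (f : ℕ → ℝ) (a b : ℕ) (h : a ≤ b) :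
    ∑ t ∈ Finset.Ico a b, (f (t + 1) - f t) = f b - f a := by
  induction b with
  | zero => interval_cases a; simp
  | succ n ih =>
    rcases Nat.lt_or_ge a (n+1) with h1 | h1
    · rw [Finset.sum_Ico_succ_top (by omega), ih (by omega)]; ring
    · have : a = n + 1 := by omega
      subst this; simp

lemma clip_sq_le_sq (D x : ℝ) (hD : 0 ≤ D) : (clip D x) ^ 2 ≤ x ^ 2 := by
  unfold clip
  rcases eq_or_ne x 0 with rfl | hx
  · simp
  · have h1 : min (D / |x|) 1 ≤ 1 := min_le_right _ _
    have h0 : 0 ≤ min (D / |x|) 1 := le_min (by positivity) one_pos.le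
    have hm2 : (min (D / |x|) 1) ^ 2 ≤ 1 := by nlinarith
    calc (x * min (D / |x|) 1) ^ 2 = x ^ 2 * (min (D / |x|) 1) ^ 2 := by ring
      _ ≤ x ^ 2 * 1 := mul_le_mul_of_nonneg_left hm2 (sq_nonneg x)
      _ = x ^ 2 := mul_one _

lemma clip_sq_le_D (D x : ℝ) (hD : 0 ≤ D) : (clip D x) ^ 2 ≤ D ^ 2 := by
  unfold clip
  rcases eq_or_ne x 0 with rfl | hx
  · simpa using sq_nonneg D
  · have hax : 0 < |x| := abs_pos.mpr hx
    have h1 : min (D / |x|) 1 ≤ D / |x| := min_le_left _ _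
    have h0 : 0 ≤ min (D / |x|) 1 := le_min (by positivity) one_pos.le
    have : |x * min (D / |x|) 1| ≤ D := by
      rw [abs_mul, abs_of_nonneg h0]
      calc |x| * min (D / |x|) 1 ≤ |x| * (D / |x|) := by
            exact mul_le_mul_of_nonneg_left h1 hax.le
        _ = D := by field_simp
    nlinarith [abs_nonneg (x * min (D / |x|) 1), sq_abs (x * min (D / |x|) 1)]

theorem stmt_12 (T τ : ℕ) (hτT : τ + 1 ≤ T) (v : ℕ → ℝ)
    (hzero : ∀ s ∈ Finset.Icc 1 τ, v s = 0) (hnz : v (τ + 1) ≠ 0)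
    (vt : ℕ → ℝ)
    (hvt : ∀ t, vt (t + 1) = clip (Real.sqrt (∑ s ∈ Finset.Icc 1 t, (v s) ^ 2)) (v (t + 1))) :
    ∑ t ∈ Finset.Icc (τ + 1) (T - 1),
        (vt (t + 1)) ^ 2 / Real.sqrt (∑ s ∈ Finset.Icc 1 t, (v s) ^ 2)
      ≤ 2 * Real.sqrt 2 * Real.sqrt (∑ t ∈ Finset.Icc 1 T, (v t) ^ 2) := by
  set S : ℕ → ℝ := fun t => ∑ s ∈ Finset.Icc 1 t, (v s) ^ 2 with hS
  have hSnonneg : ∀ t, 0 ≤ S t := fun t => Finset.sum_nonneg (fun i _ => sq_nonneg _)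
  have hSsucc : ∀ t, S (t + 1) = S t + (v (t + 1)) ^ 2 := by
    intro t
    exact Finset.sum_Icc_succ_top (by omega) _
  have hSmono : Monotone S := by
    apply monotone_nat_of_le_succ
    intro t
    rw [hSsucc]
    nlinarith [sq_nonneg (v (t+1))]
  have hSpos : ∀ t, τ + 1 ≤ t → 0 < S t := by
    intro t ht
    have h1 : (v (τ+1))^2 ≤ S t := by
      apply Finset.single_le_sum (fun i _ => sq_nonneg (v i))
      simp [Finset.mem_Icc]; omega
    nlinarith [pow_pos (abs_pos.mpr hnz) 2, sq_abs (v (τ+1))]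
  -- per-term bound
  have key : ∀ t ∈ Finset.Icc (τ + 1) (T - 1),
      (vt (t + 1)) ^ 2 / Real.sqrt (S t)
        ≤ 2 * Real.sqrt 2 * (Real.sqrt (S (t+1)) - Real.sqrt (S t)) := by
    intro t ht
    rw [Finset.mem_Icc] at ht
    have hSt : 0 < S t := hSpos t ht.1
    have hx : (0:ℝ) < Real.sqrt (S t) := Real.sqrt_pos.mpr hSt
    set a := (vt (t + 1)) ^ 2 with ha
    have ha1 : a ≤ S t := by
      rw [ha, hvt t]
      have := clip_sq_le_D (Real.sqrt (S t)) (v (t+1)) (Real.sqrt_nonneg _)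
      rwa [Real.sq_sqrt hSt.le] at this
    have ha2 : a ≤ (v (t+1))^2 := by
      rw [ha, hvt t]
      exact clip_sq_le_sq _ _ (Real.sqrt_nonneg _)
    have ha0 : 0 ≤ a := sq_nonneg _
    set x := Real.sqrt (S t) with hxdef
    set y := Real.sqrt (a + S t) with hydef
    set z := Real.sqrt (S (t+1)) with hzdef
    have hy2 : y ^ 2 = a + S t := Real.sq_sqrt (by linarith)
    have hx2 : x ^ 2 = S t := Real.sq_sqrt hSt.le
    have hyz : y ≤ z := by
      apply Real.sqrt_le_sqrt
      rw [hSsucc]; linarith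
    have hxy : x ≤ y := by
      apply Real.sqrt_le_sqrt; linarith
    have hyx : y ≤ Real.sqrt 2 * x := by
      rw [hxdef, ← Real.sqrt_mul (by norm_num)]
      apply Real.sqrt_le_sqrt; linarith
    have hs2 : Real.sqrt 2 ^ 2 = 2 := Real.sq_sqrt (by norm_num)
    have hs2ge : (1:ℝ) ≤ Real.sqrt 2 := by
      nlinarith [Real.sqrt_nonneg 2]
    rw [div_le_iff₀ hx]
    have hzx : x ≤ z := le_trans hxy hyz
    nlinarith [mul_nonneg (sub_nonneg.mpr hzx) hx.le,
      mul_nonneg (sub_nonneg.mpr hyz) (by linarith : (0:ℝ) ≤ y + x),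
      mul_nonneg (sub_nonneg.mpr hyx) (by linarith : (0:ℝ) ≤ z - x)]
  calc ∑ t ∈ Finset.Icc (τ + 1) (T - 1), (vt (t + 1)) ^ 2 / Real.sqrt (S t)
      ≤ ∑ t ∈ Finset.Icc (τ + 1) (T - 1),
          2 * Real.sqrt 2 * (Real.sqrt (S (t+1)) - Real.sqrt (S t)) :=
        Finset.sum_le_sum key
    _ = 2 * Real.sqrt 2 * ∑ t ∈ Finset.Icc (τ + 1) (T - 1),
          (Real.sqrt (S (t+1)) - Real.sqrt (S t)) := by rw [Finset.mul_sum]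
    _ = 2 * Real.sqrt 2 * (Real.sqrt (S T) - Real.sqrt (S (τ+1))) := by
        congr 1
        have hIcc : Finset.Icc (τ + 1) (T - 1) = Finset.Ico (τ + 1) T := by
          rw [← Finset.Ico_add_one_right_eq_Icc]
          congr 1
          omega
        rw [hIcc]
        exact tele (fun t => Real.sqrt (S t)) (τ+1) T hτT
    _ ≤ 2 * Real.sqrt 2 * Real.sqrt (S T) := by
        have h1 : (0:ℝ) ≤ Real.sqrt (S (τ+1)) := Real.sqrt_nonneg _
        have h2 : (0:ℝ) ≤ 2 * Real.sqrt 2 := by positivity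
        nlinarith
end

section
/- Clipping error telescoping bound: for any real sequence v_1,...,v_T with ṽ_t = clip_{√(∑_{s=1}^{t-1} v_s^2)}(v_t) and G_t = max_{s∈[1,t]} |v_s| (G_0 = 0), it holds that ∑_{t=1}^T |v_t - ṽ_t| ≤ ∑_{t=1}^T (G_t - G_{t-1}) = G_T. -/
lemma clip_diff_le (D x : ℝ) (hD : 0 ≤ D) : |x - clip D x| ≤ max 0 (|x| - D) := by
  rcases eq_or_ne x 0 with h | h
  · simp [clip, h]
  · have hx : 0 < |x| := abs_pos.mpr h
    rcases le_or_gt (|x|) D with hle | hlt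
    · have : (1:ℝ) ≤ D / |x| := (one_le_div hx).mpr hle
      simp [clip, min_eq_right this]
    · have : D / |x| ≤ 1 := (div_le_one hx).mpr hlt.le
      rw [clip, min_eq_left this]
      have : x - x * (D / |x|) = x * (1 - D / |x|) := by ring
      rw [this, abs_mul]
      have h2 : abs (1 - D / abs x) = 1 - D / abs x := abs_of_nonneg (by linarith)
      rw [h2]
      have h1 : |x| * (1 - D / |x|) = |x| - D := by field_simp
      rw [h1]
      exact le_max_right _ _

theorem stmt_13 (T : ℕ) (v vt Gm : ℕ → ℝ)
    (hvt : ∀ t, 1 ≤ t →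
      vt t = clip (Real.sqrt (∑ s ∈ Finset.Icc 1 (t - 1), (v s) ^ 2)) (v t))
    (hG0 : Gm 0 = 0)
    (hG : ∀ t, 1 ≤ t → IsGreatest ((fun s => |v s|) '' Set.Icc 1 t) (Gm t)) :
    (∑ t ∈ Finset.Icc 1 T, |v t - vt t| ≤ ∑ t ∈ Finset.Icc 1 T, (Gm t - Gm (t - 1)))
    ∧ (∑ t ∈ Finset.Icc 1 T, (Gm t - Gm (t - 1)) = Gm T) := by
  have htele : ∀ N, ∑ t ∈ Finset.Icc 1 N, (Gm t - Gm (t - 1)) = Gm N := by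
    intro N
    induction N with
    | zero => simp [hG0]
    | succ n ih =>
      rw [Finset.sum_Icc_succ_top (by omega), ih]
      simp
  refine ⟨?_, htele T⟩
  apply Finset.sum_le_sum
  intro t ht
  have ht1 : 1 ≤ t := (Finset.mem_Icc.mp ht).1
  set D := Real.sqrt (∑ s ∈ Finset.Icc 1 (t - 1), (v s) ^ 2) with hD
  have hDnn : 0 ≤ D := Real.sqrt_nonneg _
  rw [hvt t ht1]
  refine le_trans (clip_diff_le D (v t) hDnn) ?_
  -- need max 0 (|v t| - D) ≤ Gm t - Gm (t-1)
  have hGt := hG t ht1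
  have hvle : |v t| ≤ Gm t := hGt.2 ⟨t, Set.mem_Icc.mpr ⟨ht1, le_refl t⟩, rfl⟩
  have hGprev_le_Gt : Gm (t - 1) ≤ Gm t := by
    rcases eq_or_lt_of_le ht1 with h1 | h1
    · subst h1
      simp only [Nat.sub_self, hG0]
      linarith [abs_nonneg (v 1)]
    · have ht2 : 1 ≤ t - 1 := by omega
      have hGp := hG (t - 1) ht2
      obtain ⟨x, hx, hxe⟩ := hGp.1
      rw [← hxe]
      exact hGt.2 ⟨x, Set.mem_Icc.mpr ⟨(Set.mem_Icc.mp hx).1, le_trans (Set.mem_Icc.mp hx).2 (by omega)⟩, rfl⟩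
  have hGprev_le_D : Gm (t - 1) ≤ D := by
    rcases eq_or_lt_of_le ht1 with h1 | h1
    · rw [← h1]; simpa [hG0] using hDnn
    · have ht2 : 1 ≤ t - 1 := by omega
      have hGp := hG (t - 1) ht2
      obtain ⟨x, hx, hxe⟩ := hGp.1
      rw [← hxe]
      have hmem : x ∈ Finset.Icc 1 (t - 1) := by
        rw [Finset.mem_Icc]; exact Set.mem_Icc.mp hx
      have : (v x) ^ 2 ≤ ∑ s ∈ Finset.Icc 1 (t - 1), (v s) ^ 2 :=
        Finset.single_le_sum (fun i _ => sq_nonneg (v i)) hmem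
      calc |v x| = Real.sqrt ((v x) ^ 2) := (Real.sqrt_sq_eq_abs _).symm
        _ ≤ D := Real.sqrt_le_sqrt this
  apply max_le <;> linarith
end

section
/- Dynamic regret of β-FTRL on bounded domains: for D > 0, β ∈ (0,1), losses v_1,...,v_T with |v_t| ≤ G, and any comparators u_0,...,u_{T-1} with |u_t| ≤ D, the clipped iterates Δ_t = -clip_D(D (∑_{s=1}^t β^{t-s} v_s)/√(∑_{s=1}^t (β^{t-s} v_s)^2)) satisfy ∑_{t=1}^T v_t (Δ_{t-1} - u_{t-1}) ≤ 4DG(1/√(1-β) + √(1-β)·T) + G P/(1-β), where P = ∑_{t=1}^{T-1} |u_t - u_{t-1}| is the path length. -/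
lemma clip_neg (D x : ℝ) : clip D (-x) = -clip D x := by
  unfold clip
  rw [abs_neg]; ring

lemma clip_eq_self (D x : ℝ) (h : |x| ≤ D) : clip D x = x := by
  unfold clip
  rcases eq_or_ne x 0 with h0 | h0
  · simp [h0]
  · have hx : 0 < |x| := abs_pos.mpr h0
    have : (1:ℝ) ≤ D / |x| := (one_le_div hx).mpr h
    rw [min_eq_right this, mul_one]

lemma clip_abs_le (D x : ℝ) (hD : 0 ≤ D) : |clip D x| ≤ D := by
  unfold clip
  rcases eq_or_ne x 0 with h0 | h0
  · simp [h0, hD]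
  · have hx : 0 < |x| := abs_pos.mpr h0
    rcases le_or_gt (|x|) D with h | h
    · have h1 : (1:ℝ) ≤ D / |x| := (one_le_div hx).mpr h
      rw [min_eq_right h1, mul_one]; exact h
    · have h1 : D / |x| ≤ 1 := by
        rw [div_le_one hx]; exact h.le
      rw [min_eq_left h1, abs_mul, abs_of_nonneg (div_nonneg hD hx.le)]
      field_simp
      exact le_refl D

lemma clip_proj (D x y : ℝ) (hy : |y| ≤ D) : 0 ≤ (clip D x - x) * (y - clip D x) := by
  rcases le_or_gt (|x|) D with h | h
  · rw [clip_eq_self D x h]; simp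
  · have hD : 0 ≤ D := le_trans (abs_nonneg y) hy
    have hx : 0 < |x| := lt_of_le_of_lt hD h
    have h1 : D / |x| ≤ 1 := by rw [div_le_one hx]; exact h.le
    have hclip : clip D x = x * (D / |x|) := by unfold clip; rw [min_eq_left h1]
    rcases lt_or_ge 0 x with hx0 | hx0
    · have hax : |x| = x := abs_of_pos hx0
      have : clip D x = D := by rw [hclip, hax, mul_div_assoc']; field_simp
      rw [this]
      have hy1 : y - D ≤ 0 := by
        have := (abs_le.mp hy).2; linarith
      have hx1 : D - x < 0 := by rw [← hax]; linarith
      nlinarith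
    · have hx0' : x < 0 := lt_of_le_of_ne hx0 (abs_pos.mp hx)
      have hax : |x| = -x := abs_of_neg hx0'
      have : clip D x = -D := by
        rw [hclip, hax]
        rw [mul_div_assoc']
        rw [div_eq_iff (by linarith : -x ≠ 0)]
        ring
      rw [this]
      have hy1 : 0 ≤ y + D := by have := (abs_le.mp hy).1; linarith
      have hx1 : 0 < -D - x := by
        have : -x > D := by rw [← hax]; exact h
        linarith
      nlinarith

noncomputable def Sd (β : ℝ) (v : ℕ → ℝ) (t : ℕ) : ℝ := ∑ s ∈ Finset.Icc 1 t, β ^ (t - s) * v s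
noncomputable def Vd (β : ℝ) (v : ℕ → ℝ) (t : ℕ) : ℝ := ∑ s ∈ Finset.Icc 1 t, (β ^ (t - s) * v s) ^ 2
noncomputable def Wd (β : ℝ) (v : ℕ → ℝ) (t : ℕ) : ℝ := Real.sqrt (Vd β v t)
noncomputable def Pd (β : ℝ) (v Δ : ℕ → ℝ) (t : ℕ) : ℝ := ∑ s ∈ Finset.Icc 1 t, β ^ (t - s) * (v s * Δ (s - 1))
noncomputable def Psi (D β : ℝ) (v Δ : ℕ → ℝ) (t : ℕ) : ℝ :=
  Sd β v t * Δ t + Wd β v t / (2 * D) * (Δ t) ^ 2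

lemma Sd_zero (β : ℝ) (v : ℕ → ℝ) : Sd β v 0 = 0 := by simp [Sd]
lemma Vd_zero (β : ℝ) (v : ℕ → ℝ) : Vd β v 0 = 0 := by simp [Vd]
lemma Wd_zero (β : ℝ) (v : ℕ → ℝ) : Wd β v 0 = 0 := by simp [Wd, Vd_zero]
lemma Pd_zero (β : ℝ) (v Δ : ℕ → ℝ) : Pd β v Δ 0 = 0 := by simp [Pd]

lemma Sd_succ (β : ℝ) (v : ℕ → ℝ) (t : ℕ) : Sd β v (t+1) = β * Sd β v t + v (t+1) := by
  unfold Sd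
  rw [Finset.sum_Icc_succ_top (by omega : 1 ≤ t+1), Finset.mul_sum]
  simp only [Nat.sub_self, pow_zero, one_mul]
  congr 1
  apply Finset.sum_congr rfl
  intro s hs
  have h1 : s ≤ t := (Finset.mem_Icc.mp hs).2
  have h2 : t + 1 - s = (t - s) + 1 := by omega
  rw [h2, pow_succ]; ring

lemma Vd_succ (β : ℝ) (v : ℕ → ℝ) (t : ℕ) : Vd β v (t+1) = β^2 * Vd β v t + (v (t+1))^2 := by
  unfold Vd
  rw [Finset.sum_Icc_succ_top (by omega : 1 ≤ t+1), Finset.mul_sum]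
  simp only [Nat.sub_self, pow_zero, one_mul]
  congr 1
  apply Finset.sum_congr rfl
  intro s hs
  have h1 : s ≤ t := (Finset.mem_Icc.mp hs).2
  have h2 : t + 1 - s = (t - s) + 1 := by omega
  rw [h2, pow_succ]; ring

lemma Pd_succ (β : ℝ) (v Δ : ℕ → ℝ) (t : ℕ) : Pd β v Δ (t+1) = β * Pd β v Δ t + v (t+1) * Δ t := by
  unfold Pd
  rw [Finset.sum_Icc_succ_top (by omega : 1 ≤ t+1), Finset.mul_sum]
  simp only [Nat.sub_self, pow_zero, one_mul, Nat.add_sub_cancel]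
  congr 1
  apply Finset.sum_congr rfl
  intro s hs
  have h1 : s ≤ t := (Finset.mem_Icc.mp hs).2
  have h2 : t + 1 - s = (t - s) + 1 := by omega
  rw [h2, pow_succ]; ring

lemma Vd_nonneg (β : ℝ) (v : ℕ → ℝ) (t : ℕ) : 0 ≤ Vd β v t :=
  Finset.sum_nonneg fun _ _ => sq_nonneg _

lemma Wd_nonneg (β : ℝ) (v : ℕ → ℝ) (t : ℕ) : 0 ≤ Wd β v t := Real.sqrt_nonneg _

lemma Sd_eq_zero_of_Vd (β : ℝ) (hβ : 0 < β) (v : ℕ → ℝ) (t : ℕ) (h : Vd β v t = 0) :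
    Sd β v t = 0 := by
  unfold Vd at h
  unfold Sd
  apply Finset.sum_eq_zero
  intro s hs
  have := (Finset.sum_eq_zero_iff_of_nonneg (fun i _ => sq_nonneg _)).mp h s hs
  exact pow_eq_zero_iff (n := 2) (by norm_num) |>.mp this

lemma optA (D β : ℝ) (hD : 0 < D) (hβ0 : 0 < β) (v Δ : ℕ → ℝ) (hΔ0 : Δ 0 = 0)
    (hΔ : ∀ t, 1 ≤ t → Δ t = if Vd β v t = 0 then 0
        else -clip D (D * Sd β v t / Real.sqrt (Vd β v t)))
    (t : ℕ) (y : ℝ) (hy : |y| ≤ D) :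
    Psi D β v Δ t + Wd β v t / (2 * D) * (y - Δ t) ^ 2 ≤ Sd β v t * y + Wd β v t / (2 * D) * y ^ 2 := by
  rcases Nat.eq_zero_or_pos t with ht | ht
  · subst ht
    simp [Psi, Sd_zero, Wd_zero, hΔ0]
  rcases eq_or_lt_of_le (Vd_nonneg β v t) with hV0 | hVpos
  · have hV0 := hV0.symm
    have hS0 := Sd_eq_zero_of_Vd β hβ0 v t hV0
    have hΔt : Δ t = 0 := by rw [hΔ t ht, if_pos hV0]
    simp [Psi, hS0, hΔt, Wd, hV0]
  · have hW : 0 < Wd β v t := Real.sqrt_pos.mpr hVpos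
    set W := Wd β v t with hWdef
    set S := Sd β v t with hSdef
    set z : ℝ := -(D * S / W) with hzdef
    have hΔt : Δ t = clip D z := by
      rw [hΔ t ht, if_neg (ne_of_gt hVpos), hzdef, clip_neg]
      rfl
    have hSz : S = -(z * W) / D := by
      rw [hzdef]
      field_simp
    have hproj : 0 ≤ (clip D z - z) * (y - clip D z) := clip_proj D z y hy
    have hkey : (S * y + W / (2 * D) * y ^ 2) -
        (Psi D β v Δ t + W / (2 * D) * (y - Δ t) ^ 2)
        = W / D * ((clip D z - z) * (y - clip D z)) := by
      unfold Psi
      rw [← hWdef, ← hSdef, hΔt, hSz]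
      field_simp
      ring
    have h2 : 0 ≤ W / D * ((clip D z - z) * (y - clip D z)) :=
      mul_nonneg (div_nonneg hW.le hD.le) hproj
    linarith

set_option maxHeartbeats 2000000 in
lemma arith1 (D a b W' d : ℝ) (hD : 0 < D) (hb : 0 ≤ b) (hW' : 0 ≤ W')
    (hsq : W' ^ 2 = b ^ 2 + a ^ 2) (hd : |d| ≤ 2 * D) :
    0 ≤ a * d + b / (2 * D) * d ^ 2 + 2 * Real.sqrt 2 * D * (W' - b) := by
  set s2 := Real.sqrt 2 with hs2def
  have hs2sq : s2 ^ 2 = 2 := Real.sq_sqrt (by norm_num)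
  have hs2nn : 0 ≤ s2 := Real.sqrt_nonneg 2
  have hs2ge1 : 1 ≤ s2 := by nlinarith
  have hbW' : b ≤ W' := by nlinarith [sq_nonneg a]
  have hexpr : a * d + b / (2 * D) * d ^ 2 + 2 * s2 * D * (W' - b)
      = (2 * D * (a * d) + b * d ^ 2 + 4 * s2 * D ^ 2 * (W' - b)) / (2 * D) := by
    field_simp
    ring
  rw [hexpr]
  apply div_nonneg _ (by linarith)
  rcases le_or_gt (a ^ 2) (8 * b ^ 2) with hcase | hcase
  · -- small gradient case
    rcases eq_or_lt_of_le hb with hb0 | hbpos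
    · have ha0 : a = 0 := by nlinarith
      rw [ha0, ← hb0]
      simp
      positivity
    · have hW3b : W' ≤ 3 * b := by nlinarith
      have h5 : a ^ 2 ≤ 4 * b * (W' - b) := by nlinarith
      have h5D : D ^ 2 * a ^ 2 ≤ 4 * D ^ 2 * b * (W' - b) := by
        nlinarith [mul_le_mul_of_nonneg_left h5 (sq_nonneg D)]
      have hbw : 0 ≤ b * (W' - b) := mul_nonneg hb (by linarith)
      have h6 : D ^ 2 * a ^ 2 ≤ 4 * s2 * D ^ 2 * b * (W' - b) := by
        nlinarith [mul_le_mul_of_nonneg_left (mul_nonneg (sq_nonneg D) hbw)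
          (sub_nonneg.mpr hs2ge1)]
      have hmul : 0 ≤ b * (2 * D * (a * d) + b * d ^ 2 + 4 * s2 * D ^ 2 * (W' - b)) := by
        nlinarith [sq_nonneg (b * d + D * a)]
      nlinarith [hmul, hbpos]
  · -- large gradient case
    have e3 : (2 * s2 * b) ^ 2 = 8 * b ^ 2 := by
      have : (2 * s2 * b) ^ 2 = 4 * s2 ^ 2 * b ^ 2 := by ring
      rw [this, hs2sq]; ring
    have habs : 2 * s2 * b ≤ |a| := by
      by_contra hcon
      push_neg at hcon
      have := mul_self_lt_mul_self (abs_nonneg a) hcon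
      have h4 : |a| ^ 2 < (2 * s2 * b) ^ 2 := by
        rw [pow_two, pow_two]; exact this
      rw [e3, sq_abs] at h4
      linarith
    have e : s2 ^ 2 * a ^ 2 = 2 * a ^ 2 := by rw [hs2sq]
    have hrhs : 0 ≤ 2 * b + s2 * |a| := add_nonneg (by linarith) (mul_nonneg hs2nn (abs_nonneg a))
    have hsq2 : (2 * b + s2 * |a|) ^ 2 ≤ (2 * W') ^ 2 := by
      nlinarith [sq_abs a, mul_nonneg (abs_nonneg a) (sub_nonneg.mpr habs), e]
    have h7 : s2 * |a| ≤ 2 * (W' - b) := by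
      by_contra hcon
      push_neg at hcon
      nlinarith [hsq2, hrhs, hW']
    have had : -(|a| * |d|) ≤ a * d := by
      rw [← abs_mul]; exact neg_abs_le _
    have h10 : 4 * D ^ 2 * |a| ≤ 4 * s2 * D ^ 2 * (W' - b) := by
      have e1 := mul_le_mul_of_nonneg_left h7 (by nlinarith [hs2nn, sq_nonneg D, mul_nonneg hs2nn (sq_nonneg D)] : (0:ℝ) ≤ 2 * s2 * D ^ 2)
      have e2 : 2 * s2 * D ^ 2 * (s2 * |a|) = 2 * s2 ^ 2 * D ^ 2 * |a| := by ring
      rw [e2, hs2sq] at e1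
      linarith
    have h9 : 0 ≤ 2 * D * |a| * (2 * D - |d|) := by
      apply mul_nonneg (mul_nonneg (by linarith) (abs_nonneg a))
      linarith
    have hh1 : 2 * D * (-(|a| * |d|)) ≤ 2 * D * (a * d) :=
      mul_le_mul_of_nonneg_left had (by linarith)
    have hh2 : 0 ≤ b * d ^ 2 := mul_nonneg hb (sq_nonneg d)
    nlinarith [hh1, hh2, h10, h9]

lemma roundB (D β : ℝ) (hD : 0 < D) (hβ0 : 0 < β) (v Δ : ℕ → ℝ) (hΔ0 : Δ 0 = 0)
    (hΔ : ∀ t, 1 ≤ t → Δ t = if Vd β v t = 0 then 0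
        else -clip D (D * Sd β v t / Real.sqrt (Vd β v t)))
    (hΔabs : ∀ t, |Δ t| ≤ D) (t : ℕ) :
    β * Psi D β v Δ t + v (t+1) * Δ t ≤
      Psi D β v Δ (t+1) + 2 * Real.sqrt 2 * D * (Wd β v (t+1) - β * Wd β v t) := by
  have hA := optA D β hD hβ0 v Δ hΔ0 hΔ t (Δ (t+1)) (hΔabs (t+1))
  have hd : |Δ (t+1) - Δ t| ≤ 2 * D := by
    have h1 := hΔabs t
    have h2 := hΔabs (t+1)
    calc |Δ (t+1) - Δ t| ≤ |Δ (t+1)| + |Δ t| := abs_sub _ _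
    _ ≤ 2 * D := by linarith
  have hb : 0 ≤ β * Wd β v t := mul_nonneg hβ0.le (Wd_nonneg β v t)
  have hW' : 0 ≤ Wd β v (t+1) := Wd_nonneg β v (t+1)
  have hsq : (Wd β v (t+1)) ^ 2 = (β * Wd β v t) ^ 2 + (v (t+1)) ^ 2 := by
    have h1 : (Wd β v (t+1)) ^ 2 = Vd β v (t+1) := Real.sq_sqrt (Vd_nonneg β v (t+1))
    have h2 : (Wd β v t) ^ 2 = Vd β v t := Real.sq_sqrt (Vd_nonneg β v t)
    rw [h1, Vd_succ, mul_pow, h2]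
  have harith := arith1 D (v (t+1)) (β * Wd β v t) (Wd β v (t+1)) (Δ (t+1) - Δ t)
    hD hb hW' hsq hd
  have hWb : β * Wd β v t ≤ Wd β v (t+1) := by nlinarith [sq_nonneg (v (t+1))]
  have hnn : 0 ≤ (Wd β v (t+1) - β * Wd β v t) / (2 * D) * (Δ (t+1)) ^ 2 :=
    mul_nonneg (div_nonneg (by linarith) (by linarith)) (sq_nonneg _)
  have hAβ := mul_le_mul_of_nonneg_left hA hβ0.le
  have hSsucc := Sd_succ β v t
  unfold Psi at *
  rw [hSsucc]
  ring_nf at hAβ harith hnn ⊢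
  linarith [hAβ, harith, hnn]

lemma regretP (D β : ℝ) (hD : 0 < D) (hβ0 : 0 < β) (v Δ : ℕ → ℝ) (hΔ0 : Δ 0 = 0)
    (hΔ : ∀ t, 1 ≤ t → Δ t = if Vd β v t = 0 then 0
        else -clip D (D * Sd β v t / Real.sqrt (Vd β v t)))
    (hΔabs : ∀ t, |Δ t| ≤ D) :
    ∀ t, Pd β v Δ t ≤ Psi D β v Δ t + 2 * Real.sqrt 2 * D * Wd β v t := by
  intro t
  induction t with
  | zero =>
    simp [Pd_zero, Psi, Sd_zero, Wd_zero, hΔ0]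
  | succ n ih =>
    have hstep := roundB D β hD hβ0 v Δ hΔ0 hΔ hΔabs n
    have hIH := mul_le_mul_of_nonneg_left ih hβ0.le
    rw [Pd_succ]
    have hW := Wd_nonneg β v n
    nlinarith [hIH, hstep]

lemma Rbound (D β : ℝ) (hD : 0 < D) (hβ0 : 0 < β) (v Δ : ℕ → ℝ) (hΔ0 : Δ 0 = 0)
    (hΔ : ∀ t, 1 ≤ t → Δ t = if Vd β v t = 0 then 0
        else -clip D (D * Sd β v t / Real.sqrt (Vd β v t)))
    (hΔabs : ∀ t, |Δ t| ≤ D) (t : ℕ) (u : ℝ) (hu : |u| ≤ D) :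
    Pd β v Δ t - Sd β v t * u ≤ 4 * D * Wd β v t := by
  have h1 := regretP D β hD hβ0 v Δ hΔ0 hΔ hΔabs t
  have h2 := optA D β hD hβ0 v Δ hΔ0 hΔ t u hu
  have hW := Wd_nonneg β v t
  have hu2 : u ^ 2 ≤ D ^ 2 := by
    have := abs_nonneg u
    nlinarith [sq_abs u]
  have h3 : Wd β v t / (2 * D) * u ^ 2 ≤ Wd β v t * D / 2 := by
    rw [div_mul_eq_mul_div, div_le_iff₀ (by linarith)]
    nlinarith
  have h4 : 0 ≤ Wd β v t / (2 * D) * (u - Δ t) ^ 2 :=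
    mul_nonneg (div_nonneg hW (by linarith)) (sq_nonneg _)
  have hs2 : Real.sqrt 2 ≤ 7 / 4 := by
    rw [show (7:ℝ)/4 = Real.sqrt ((7/4)^2) from (Real.sqrt_sq (by norm_num)).symm]
    apply Real.sqrt_le_sqrt
    norm_num
  have h5 := mul_le_mul_of_nonneg_right hs2 (mul_nonneg (by linarith : (0:ℝ) ≤ 2 * D) hW)
  unfold Psi at h1 h2
  ring_nf at h1 h2 h3 h4 h5 ⊢
  linarith [h1, h2, h3, h4, h5]

lemma Vbound (β G : ℝ) (hβ0 : 0 < β) (hβ1 : β < 1) (hG0 : 0 ≤ G) (v : ℕ → ℝ) (T : ℕ)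
    (hG : ∀ t ∈ Finset.Icc 1 T, |v t| ≤ G) :
    ∀ t, t ≤ T → Vd β v t ≤ G ^ 2 / (1 - β) := by
  intro t
  induction t with
  | zero =>
    intro _
    rw [Vd_zero]
    have h1β : 0 < 1 - β := by linarith
    positivity
  | succ n ih =>
    intro hn
    have hihn := ih (by omega)
    rw [Vd_succ]
    have hv : |v (n+1)| ≤ G := hG (n+1) (Finset.mem_Icc.mpr ⟨by omega, hn⟩)
    have hv2 : (v (n+1)) ^ 2 ≤ G ^ 2 := by nlinarith [sq_abs (v (n+1)), abs_nonneg (v (n+1))]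
    have h1β : 0 < 1 - β := by linarith
    rw [le_div_iff₀ h1β] at hihn ⊢
    nlinarith [mul_le_mul_of_nonneg_left hihn (sq_nonneg β), Vd_nonneg β v n,
      sq_nonneg G, sq_nonneg β, mul_nonneg (mul_nonneg hβ0.le (sub_nonneg.mpr hβ1.le)) (sq_nonneg G)]

lemma Sbound (β G : ℝ) (hβ0 : 0 < β) (hβ1 : β < 1) (hG0 : 0 ≤ G) (v : ℕ → ℝ) (T : ℕ)
    (hG : ∀ t ∈ Finset.Icc 1 T, |v t| ≤ G) :
    ∀ t, t ≤ T → |Sd β v t| ≤ G / (1 - β) := by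
  intro t
  induction t with
  | zero =>
    intro _
    rw [Sd_zero, abs_zero]
    have h1β : 0 < 1 - β := by linarith
    positivity
  | succ n ih =>
    intro hn
    have hihn := ih (by omega)
    rw [Sd_succ]
    have hv : |v (n+1)| ≤ G := hG (n+1) (Finset.mem_Icc.mpr ⟨by omega, hn⟩)
    have h1β : 0 < 1 - β := by linarith
    calc |β * Sd β v n + v (n+1)| ≤ |β * Sd β v n| + |v (n+1)| := abs_add_le _ _
    _ = β * |Sd β v n| + |v (n+1)| := by rw [abs_mul, abs_of_pos hβ0]
    _ ≤ β * (G / (1 - β)) + G := by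
        have := mul_le_mul_of_nonneg_left hihn hβ0.le
        linarith
    _ ≤ G / (1 - β) := by
        have e : β * (G / (1 - β)) + G = G / (1 - β) := by
          field_simp
          ring
        rw [e]

lemma ident_s14 (β : ℝ) (v u Δ : ℕ → ℝ) : ∀ m : ℕ,
    ∑ t ∈ Finset.Icc 1 (m+1), v t * (Δ (t-1) - u (t-1)) =
      (Pd β v Δ (m+1) - Sd β v (m+1) * u m)
        + ∑ t ∈ Finset.Icc 1 m,
            ((Pd β v Δ t - Sd β v t * u (t-1)) - β * (Pd β v Δ t - Sd β v t * u t)) := by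
  intro m
  induction m with
  | zero =>
    simp only [Finset.Icc_self, Finset.sum_singleton, Finset.Icc_eq_empty_of_lt
      (by omega : (1:ℕ) > 0), Finset.sum_empty, add_zero]
    have h1 : Pd β v Δ 1 = v 1 * Δ 0 := by
      have := Pd_succ β v Δ 0
      rw [Pd_zero] at this
      simpa using this
    have h2 : Sd β v 1 = v 1 := by
      have := Sd_succ β v 0
      rw [Sd_zero] at this
      simpa using this
    rw [h1, h2]
    simp
    ring
  | succ n ih =>
    rw [Finset.sum_Icc_succ_top (by omega : 1 ≤ n + 1 + 1), ih,
      Finset.sum_Icc_succ_top (by omega : 1 ≤ n + 1)]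
    simp only [Nat.add_sub_cancel]
    rw [Pd_succ β v Δ (n+1), Sd_succ β v (n+1)]
    ring

theorem stmt_14 (D G β : ℝ) (hD : 0 < D) (hβ : β ∈ Set.Ioo (0:ℝ) 1)
    (T : ℕ) (hT : 1 ≤ T) (v u : ℕ → ℝ)
    (hG : ∀ t ∈ Finset.Icc 1 T, |v t| ≤ G)
    (hu : ∀ t, |u t| ≤ D)
    (Δ : ℕ → ℝ) (hΔ0 : Δ 0 = 0)
    (hΔ : ∀ t, 1 ≤ t →
      Δ t = if (∑ s ∈ Finset.Icc 1 t, (β ^ (t - s) * v s) ^ 2) = 0 then 0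
        else -clip D (D * (∑ s ∈ Finset.Icc 1 t, β ^ (t - s) * v s)
          / Real.sqrt (∑ s ∈ Finset.Icc 1 t, (β ^ (t - s) * v s) ^ 2))) :
    ∑ t ∈ Finset.Icc 1 T, v t * (Δ (t - 1) - u (t - 1))
      ≤ 4 * D * G * (1 / Real.sqrt (1 - β) + Real.sqrt (1 - β) * T)
        + G * (∑ t ∈ Finset.Icc 1 (T - 1), |u t - u (t - 1)|) / (1 - β) := by
  obtain ⟨hβ0, hβ1⟩ := hβ
  have h1β : 0 < 1 - β := by linarith
  set r := Real.sqrt (1 - β) with hrdef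
  have hr : 0 < r := Real.sqrt_pos.mpr h1β
  have hr2 : r ^ 2 = 1 - β := Real.sq_sqrt h1β.le
  have hG0 : 0 ≤ G := le_trans (abs_nonneg (v 1)) (hG 1 (Finset.mem_Icc.mpr ⟨le_refl 1, hT⟩))
  have hΔ' : ∀ t, 1 ≤ t → Δ t = if Vd β v t = 0 then 0
      else -clip D (D * Sd β v t / Real.sqrt (Vd β v t)) := hΔ
  have hΔabs : ∀ t, |Δ t| ≤ D := by
    intro t
    cases t with
    | zero => rw [hΔ0]; simpa using hD.le
    | succ n =>
      rw [hΔ' (n+1) (by omega)]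
      split_ifs
      · simpa using hD.le
      · rw [abs_neg]; exact clip_abs_le D _ hD.le
  have hWle : ∀ t, t ≤ T → Wd β v t ≤ G / r := by
    intro t ht
    have h1 := Vbound β G hβ0 hβ1 hG0 v T hG t ht
    have h2 : Wd β v t ≤ Real.sqrt (G ^ 2 / (1 - β)) := Real.sqrt_le_sqrt h1
    rwa [Real.sqrt_div (sq_nonneg G), Real.sqrt_sq hG0, ← hrdef] at h2
  have hRb : ∀ t, t ≤ T → ∀ y : ℝ, |y| ≤ D → Pd β v Δ t - Sd β v t * y ≤ 4 * D * (G / r) := by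
    intro t ht y hy
    have h1 := Rbound D β hD hβ0 v Δ hΔ0 hΔ' hΔabs t y hy
    have h2 := hWle t ht
    nlinarith [mul_le_mul_of_nonneg_left h2 (by linarith : (0:ℝ) ≤ 4 * D)]
  obtain ⟨m, hTm⟩ : ∃ m, T = m + 1 := ⟨T - 1, by omega⟩
  have hm : T - 1 = m := by omega
  rw [hTm]
  simp only [Nat.add_sub_cancel]
  rw [ident_s14 β v u Δ m]
  have hhead : Pd β v Δ (m+1) - Sd β v (m+1) * u m ≤ 4 * D * (G / r) :=
    hRb (m+1) (by omega) (u m) (hu m)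
  have hterm : ∀ t ∈ Finset.Icc 1 m,
      (Pd β v Δ t - Sd β v t * u (t-1)) - β * (Pd β v Δ t - Sd β v t * u t)
        ≤ 4 * D * G * r + (G / (1 - β)) * |u t - u (t-1)| := by
    intro t htmem
    obtain ⟨ht1, htm⟩ := Finset.mem_Icc.mp htmem
    have hb1 : Pd β v Δ t - Sd β v t * u t ≤ 4 * D * (G / r) := hRb t (by omega) (u t) (hu t)
    have hb2 : Sd β v t * (u t - u (t-1)) ≤ (G / (1 - β)) * |u t - u (t-1)| := by
      calc Sd β v t * (u t - u (t-1)) ≤ |Sd β v t * (u t - u (t-1))| := le_abs_self _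
      _ = |Sd β v t| * |u t - u (t-1)| := abs_mul _ _
      _ ≤ (G / (1 - β)) * |u t - u (t-1)| :=
          mul_le_mul_of_nonneg_right (Sbound β G hβ0 hβ1 hG0 v T hG t (by omega)) (abs_nonneg _)
    have he : (1 - β) * (4 * D * (G / r)) = 4 * D * G * r := by
      rw [← hr2]
      field_simp
    have hb1' := mul_le_mul_of_nonneg_left hb1 h1β.le
    rw [he] at hb1'
    have hexpand : (Pd β v Δ t - Sd β v t * u (t-1)) - β * (Pd β v Δ t - Sd β v t * u t)
        = (1 - β) * (Pd β v Δ t - Sd β v t * u t) + Sd β v t * (u t - u (t-1)) := by ring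
    rw [hexpand]
    linarith
  have hsum := Finset.sum_le_sum hterm
  rw [Finset.sum_add_distrib, Finset.sum_const, Nat.card_Icc, ← Finset.mul_sum] at hsum
  simp only [Nat.add_sub_cancel, nsmul_eq_mul] at hsum
  have hcast : ((m+1 : ℕ) : ℝ) = (m : ℝ) + 1 := by push_cast; ring
  rw [hcast]
  have hfin1 : 4 * D * (G / r) = 4 * D * G * (1 / r) := by ring
  have hfin2 : (G / (1 - β)) * (∑ t ∈ Finset.Icc 1 m, |u t - u (t-1)|)
      = G * (∑ t ∈ Finset.Icc 1 m, |u t - u (t-1)|) / (1 - β) := by ring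
  have hrm : 0 ≤ 4 * D * G * r := by positivity
  have hcm : (0:ℝ) ≤ (m:ℝ) := Nat.cast_nonneg m
  nlinarith [hhead, hsum, hrm, hcm]
end

section
/- Lower bound for non-momentum learners: let T be a multiple of 4 and define the 2D loss sequence v_t = (1,0) for even t ≤ T/2, v_t = (0,1) for odd t ≤ T/2, v_t = (-1,0) for even t > T/2, v_t = (0,-1) for odd t > T/2, and comparators u_t = (-1,-1) for 0 ≤ t ≤ T/2 - 1 and u_t = (1,1) for t ≥ T/2. Then ∑_{t=1}^T ⟨v_t, u_{t-1}⟩ = -T, the coordinate-wise path length is at most 2 in each coordinate, each u_{t-1} minimizes ⟨v_t, ·⟩ over [-1,1]^2, and any learner of the form Δ_t[i] = -α_t[i] v_t[i] (with arbitrary α_t[i] > 0) satisfies ∑_{t=1}^T ⟨v_t, Δ_{t-1}⟩ = 0, hence its dynamic regret equals T. -/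
noncomputable def dot2 (p q : Fin 2 → ℝ) : ℝ := p 0 * q 0 + p 1 * q 1

theorem stmt_16 (T : ℕ) (hT4 : 4 ∣ T) (hT : 0 < T)
    (v u : ℕ → Fin 2 → ℝ)
    (hv : ∀ t, v t = if t ≤ T / 2 then (if Even t then ![1, 0] else ![0, 1])
                     else (if Even t then ![-1, 0] else ![0, -1]))
    (hu : ∀ t, u t = if t < T / 2 then ![-1, -1] else ![1, 1]) :
    (∑ t ∈ Finset.Icc 1 T, dot2 (v t) (u (t - 1)) = -(T : ℝ))
    ∧ (∀ i : Fin 2, ∑ t ∈ Finset.Icc 1 (T - 1), |u t i - u (t - 1) i| ≤ 2)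
    ∧ (∀ t ∈ Finset.Icc 1 T, ∀ p : Fin 2 → ℝ, (∀ i, |p i| ≤ 1) →
        dot2 (v t) (u (t - 1)) ≤ dot2 (v t) p)
    ∧ (∀ (Δ a : ℕ → Fin 2 → ℝ),
        (∀ t i, 0 < a t i) →
        (∀ i, Δ 0 i = 0) →
        (∀ t, 1 ≤ t → ∀ i, Δ t i = -(a t i) * v t i) →
        (∑ t ∈ Finset.Icc 1 T, dot2 (v t) (Δ (t - 1)) = 0
          ∧ ∑ t ∈ Finset.Icc 1 T, dot2 (v t) (Δ (t - 1) - u (t - 1)) = (T : ℝ))) := by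
  have hT4' : 4 ≤ T := Nat.le_of_dvd hT hT4
  have hVU : ∀ t ∈ Finset.Icc 1 T, dot2 (v t) (u (t - 1)) = -1 := by
    intro t ht
    simp only [Finset.mem_Icc] at ht
    rw [hv, hu]
    have h1 : t - 1 < T / 2 ↔ t ≤ T / 2 := by omega
    by_cases h : t ≤ T / 2 <;> by_cases he : Even t <;>
      simp [dot2, h, he, h1] <;> norm_num
  have hsum1 : ∑ t ∈ Finset.Icc 1 T, dot2 (v t) (u (t - 1)) = -(T : ℝ) := by
    rw [Finset.sum_congr rfl hVU, Finset.sum_const, Nat.card_Icc]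
    simp
  refine ⟨hsum1, ?_, ?_, ?_⟩
  · intro i
    have key : ∀ t ∈ Finset.Icc 1 (T - 1), |u t i - u (t - 1) i|
        = if t = T / 2 then 2 else 0 := by
      intro t ht
      simp only [Finset.mem_Icc] at ht
      rw [hu, hu]
      rcases lt_trichotomy t (T / 2) with h | h | h
      · have h1 : t - 1 < T / 2 := by omega
        have h2 : t ≠ T / 2 := by omega
        simp [h, h1, h2]
      · have h1 : t - 1 < T / 2 := by omega
        have h2 : ¬ t < T / 2 := by omega
        subst h
        simp only [h1, h2, if_pos, if_neg, if_true]
        fin_cases i <;> norm_num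
      · have h1 : ¬ t - 1 < T / 2 := by omega
        have h2 : ¬ t < T / 2 := by omega
        have h3 : t ≠ T / 2 := by omega
        simp [h1, h2, h3]
    rw [Finset.sum_congr rfl key, Finset.sum_ite_eq' (Finset.Icc 1 (T - 1)) (T / 2)]
    have hmem : T / 2 ∈ Finset.Icc 1 (T - 1) := by
      simp only [Finset.mem_Icc]; omega
    rw [if_pos hmem]
  · intro t ht p hp
    rw [hVU t ht, hv]
    have h0 := abs_le.mp (hp 0)
    have h1 := abs_le.mp (hp 1)
    by_cases h : t ≤ T / 2 <;> by_cases he : Even t <;>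
      simp [dot2, h, he] <;> linarith
  · intro Δ a ha hΔ0 hΔ
    have hzero : ∀ t ∈ Finset.Icc 1 T, dot2 (v t) (Δ (t - 1)) = 0 := by
      intro t ht
      simp only [Finset.mem_Icc] at ht
      rcases Nat.eq_or_lt_of_le ht.1 with h1 | h1
      · rw [← h1]
        simp [dot2, hΔ0]
      · have ht1 : 1 ≤ t - 1 := by omega
        simp only [dot2]
        rw [hΔ (t - 1) ht1 0, hΔ (t - 1) ht1 1, hv t, hv (t - 1)]
        by_cases he : Even t
        · have he' : ¬ Even (t - 1) := by
            rw [Nat.even_sub ht.1]; simp [he]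
          by_cases h2 : t ≤ T / 2 <;> by_cases h3 : t - 1 ≤ T / 2 <;>
            simp [h2, h3, he, he'] <;> ring
        · have he' : Even (t - 1) := by
            rw [Nat.even_sub ht.1]; simp [he]
          by_cases h2 : t ≤ T / 2 <;> by_cases h3 : t - 1 ≤ T / 2 <;>
            simp [h2, h3, he, he'] <;> ring
    have hs0 : ∑ t ∈ Finset.Icc 1 T, dot2 (v t) (Δ (t - 1)) = 0 :=
      Finset.sum_eq_zero hzero
    refine ⟨hs0, ?_⟩
    have hsplit : ∀ t ∈ Finset.Icc 1 T, dot2 (v t) (Δ (t - 1) - u (t - 1))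
        = dot2 (v t) (Δ (t - 1)) - dot2 (v t) (u (t - 1)) := by
      intro t _
      simp only [dot2, Pi.sub_apply]; ring
    rw [Finset.sum_congr rfl hsplit, Finset.sum_sub_distrib, hs0, hsum1]
    ring
end

section
/- Lower bound for undiscounted FTRL: with the same 2D loss and comparator sequences as in the non-momentum lower bound (T a multiple of 4), the clipped scale-free FTRL learner Δ_t[i] = -clip_1(α (∑_{s=1}^t v_s[i])/√(∑_{s=1}^t v_s[i]^2)) satisfies -1 ≤ Δ_t[i] ≤ 0 for all t and i ∈ {1,2}, hence ∑_{t=1}^T ⟨v_t, Δ_{t-1}⟩ ≥ -T/2 and its dynamic regret is at least T/2. -/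
lemma clip_mem (x : ℝ) (hx : 0 ≤ x) : 0 ≤ clip 1 x ∧ clip 1 x ≤ 1 := by
  unfold clip
  rcases eq_or_lt_of_le hx with h | h
  · simp [← h]
  · rw [abs_of_pos h]
    constructor
    · exact mul_nonneg h.le (le_min (by positivity) zero_le_one)
    · calc x * min (1 / x) 1 ≤ x * (1 / x) := by
            exact mul_le_mul_of_nonneg_left (min_le_left _ _) h.le
        _ = 1 := by field_simp

lemma aux_nonneg (k t : ℕ) (ht : t ≤ 4 * k) (r : ℕ) :
    0 ≤ ∑ s ∈ Finset.Icc 1 t, (if s % 2 = r then (if s ≤ 2 * k then (1 : ℝ) else -1) else 0) := by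
  rw [← Finset.sum_filter, Finset.sum_ite]
  have hcard :
      (((Finset.Icc 1 t).filter (fun s => s % 2 = r)).filter (fun s => ¬ s ≤ 2 * k)).card ≤
      (((Finset.Icc 1 t).filter (fun s => s % 2 = r)).filter (fun s => s ≤ 2 * k)).card := by
    apply Finset.card_le_card_of_injOn (fun s => s - 2 * k)
    · intro s hs
      simp only [Finset.mem_coe, Finset.mem_filter, Finset.mem_Icc] at *
      omega
    · intro a ha b hb hab
      simp only [Finset.coe_filter, Finset.mem_Icc, Set.mem_setOf_eq] at *
      omega
  simp only [Finset.sum_const, nsmul_eq_mul, mul_one, mul_neg_one]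
  have := (Nat.cast_le (α := ℝ)).mpr hcard
  linarith

theorem stmt_17 (T : ℕ) (hT4 : 4 ∣ T) (hT : 0 < T) (α : ℝ) (hα : 0 < α)
    (v u : ℕ → Fin 2 → ℝ)
    (hv : ∀ t, v t = if t ≤ T / 2 then (if Even t then ![1, 0] else ![0, 1])
                     else (if Even t then ![-1, 0] else ![0, -1]))
    (hu : ∀ t, u t = if t < T / 2 then ![-1, -1] else ![1, 1])
    (Δ : ℕ → Fin 2 → ℝ) (hΔ0 : ∀ i, Δ 0 i = 0)
    (hΔ : ∀ t, 1 ≤ t → ∀ i, Δ t i =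
      if (∑ s ∈ Finset.Icc 1 t, (v s i) ^ 2) = 0 then 0
      else -clip 1 (α * (∑ s ∈ Finset.Icc 1 t, v s i)
        / Real.sqrt (∑ s ∈ Finset.Icc 1 t, (v s i) ^ 2))) :
    (∀ t ≤ T, ∀ i, -1 ≤ Δ t i ∧ Δ t i ≤ 0)
    ∧ (∑ t ∈ Finset.Icc 1 T, dot2 (v t) (Δ (t - 1)) ≥ -(T : ℝ) / 2)
    ∧ (∑ t ∈ Finset.Icc 1 T, dot2 (v t) (Δ (t - 1) - u (t - 1)) ≥ (T : ℝ) / 2) := by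
  obtain ⟨k, rfl⟩ := hT4
  have hk : 1 ≤ k := by omega
  have h24 : 4 * k / 2 = 2 * k := by omega
  -- pointwise description of v
  have hv0 : ∀ s, v s 0 = if s % 2 = 0 then (if s ≤ 2 * k then (1 : ℝ) else -1) else 0 := by
    intro s
    rw [hv s, h24]
    rcases Nat.even_or_odd s with he | he
    · have h2 : s % 2 = 0 := Nat.even_iff.mp he
      by_cases hle : s ≤ 2 * k <;> simp [hle, he, h2]
    · have h2 : s % 2 = 1 := Nat.odd_iff.mp he
      have hne : ¬ Even s := Nat.not_even_iff_odd.mpr he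
      by_cases hle : s ≤ 2 * k <;> simp [hle, hne, h2]
  have hv1 : ∀ s, v s 1 = if s % 2 = 1 then (if s ≤ 2 * k then (1 : ℝ) else -1) else 0 := by
    intro s
    rw [hv s, h24]
    rcases Nat.even_or_odd s with he | he
    · have h2 : ¬ s % 2 = 1 := by rw [Nat.even_iff] at he; omega
      by_cases hle : s ≤ 2 * k <;> simp [hle, he, h2]
    · have h2 : s % 2 = 1 := Nat.odd_iff.mp he
      have hne : ¬ Even s := Nat.not_even_iff_odd.mpr he
      by_cases hle : s ≤ 2 * k <;> simp [hle, hne, h2]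
  -- partial sums of v are nonnegative
  have hS : ∀ t ≤ 4 * k, ∀ i : Fin 2, 0 ≤ ∑ s ∈ Finset.Icc 1 t, v s i := by
    intro t ht i
    fin_cases i
    · have heq : ∑ s ∈ Finset.Icc 1 t, v s 0 =
          ∑ s ∈ Finset.Icc 1 t, (if s % 2 = 0 then (if s ≤ 2 * k then (1 : ℝ) else -1) else 0) :=
        Finset.sum_congr rfl (fun s _ => hv0 s)
      show (0:ℝ) ≤ ∑ s ∈ Finset.Icc 1 t, v s 0
      rw [heq]; exact aux_nonneg k t ht 0
    · have heq : ∑ s ∈ Finset.Icc 1 t, v s 1 =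
          ∑ s ∈ Finset.Icc 1 t, (if s % 2 = 1 then (if s ≤ 2 * k then (1 : ℝ) else -1) else 0) :=
        Finset.sum_congr rfl (fun s _ => hv1 s)
      show (0:ℝ) ≤ ∑ s ∈ Finset.Icc 1 t, v s 1
      rw [heq]; exact aux_nonneg k t ht 1
  -- part 1
  have hbound : ∀ t ≤ 4 * k, ∀ i, -1 ≤ Δ t i ∧ Δ t i ≤ 0 := by
    intro t ht i
    rcases Nat.eq_zero_or_pos t with rfl | ht1
    · simp [hΔ0]
    · rw [hΔ t ht1 i]
      split_ifs with hQ
      · norm_num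
      · have hQpos : 0 < ∑ s ∈ Finset.Icc 1 t, (v s i) ^ 2 :=
          (Finset.sum_nonneg (fun s _ => sq_nonneg _)).lt_of_ne (Ne.symm hQ)
        have hx : 0 ≤ α * (∑ s ∈ Finset.Icc 1 t, v s i) /
            Real.sqrt (∑ s ∈ Finset.Icc 1 t, (v s i) ^ 2) := by
          apply div_nonneg (mul_nonneg hα.le (hS t ht i)) (Real.sqrt_nonneg _)
        have := clip_mem _ hx
        constructor <;> linarith [this.1, this.2]


  -- shared: part 2 bound
  have hterm : ∀ t ∈ Finset.Icc 1 (4 * k),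
      (if t ≤ 2 * k then (-1 : ℝ) else 0) ≤ dot2 (v t) (Δ (t - 1)) := by
    intro t htm
    simp only [Finset.mem_Icc] at htm
    have hb0 := hbound (t - 1) (by omega) 0
    have hb1 := hbound (t - 1) (by omega) 1
    rw [hv t, h24]
    by_cases hle : t ≤ 2 * k <;> by_cases he : Even t <;>
      simp [dot2, hle, he] <;> linarith [hb0.1, hb0.2, hb1.1, hb1.2]
  have hsum := Finset.sum_le_sum hterm
  have hlow : ∑ t ∈ Finset.Icc 1 (4 * k), (if t ≤ 2 * k then (-1 : ℝ) else 0)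
      = -(2 * k : ℝ) := by
    rw [← Finset.sum_filter]
    have hf : (Finset.Icc 1 (4 * k)).filter (fun t => t ≤ 2 * k) = Finset.Icc 1 (2 * k) := by
      ext s; simp [Finset.mem_filter, Finset.mem_Icc]; omega
    rw [hf]
    simp [Nat.card_Icc]
  rw [hlow] at hsum
  have hP2 : ∑ t ∈ Finset.Icc 1 (4 * k), dot2 (v t) (Δ (t - 1)) ≥ -(2 * k : ℝ) := hsum
  refine ⟨hbound, by push_cast; linarith, ?_⟩
  -- part 3
  have hsplit : ∀ t ∈ Finset.Icc 1 (4 * k),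
      dot2 (v t) (Δ (t - 1) - u (t - 1)) = dot2 (v t) (Δ (t - 1)) - dot2 (v t) (u (t - 1)) := by
    intro t _
    simp [dot2]; ring
  rw [Finset.sum_congr rfl hsplit, Finset.sum_sub_distrib]
  have huval : ∀ t ∈ Finset.Icc 1 (4 * k), dot2 (v t) (u (t - 1)) = -1 := by
    intro t htm
    simp only [Finset.mem_Icc] at htm
    rw [hv t, hu (t - 1), h24]
    rcases le_or_gt t (2 * k) with hle | hle
    · rw [if_pos hle, if_pos (by omega : t - 1 < 2 * k)]
      by_cases he : Even t <;> simp [dot2, he] <;> norm_num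
    · rw [if_neg (by omega), if_neg (by omega : ¬ (t - 1 < 2 * k))]
      by_cases he : Even t <;> simp [dot2, he] <;> norm_num
  have huS : ∑ t ∈ Finset.Icc 1 (4 * k), dot2 (v t) (u (t - 1)) = -(4 * k : ℝ) := by
    rw [Finset.sum_congr rfl huval]
    simp [Nat.card_Icc]
  rw [huS]
  push_cast
  linarith
end

section
/- Dynamic regret of β-FTRL on unbounded domains (simplified): for β ∈ (0,1), α > 0, losses v_1,...,T with |v_t| ≤ G, define M = max_{t∈[1,T]} |∑_{s=1}^t β^{t-s} v_s| / √(∑_{s=1}^t (β^{t-s} v_s)^2) (taken as 0 when the denominator vanishes). Then for any comparator sequence u_0,...,u_{T-1} with |u_t| ≤ αM for all t, the β-FTRL iterates satisfy ∑_{t=1}^T v_t(Δ_{t-1} - u_{t-1}) ≤ C[(α + αM^2 + MP) G/√(1-β) + (α + αM^2)√(1-β) G T] for an absolute constant C, where P = ∑_{t=1}^{T-1} |u_t - u_{t-1}|. -/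
namespace Stmt19Aux

noncomputable section

def S (β : ℝ) (v : ℕ → ℝ) (t : ℕ) : ℝ := ∑ s ∈ Finset.Icc 1 t, β ^ (t - s) * v s
def Q (β : ℝ) (v : ℕ → ℝ) (t : ℕ) : ℝ := ∑ s ∈ Finset.Icc 1 t, (β ^ (t - s) * v s) ^ 2
def R (β : ℝ) (v : ℕ → ℝ) (t : ℕ) : ℝ := Real.sqrt (Q β v t)
def A (β : ℝ) (v : ℕ → ℝ) (t : ℕ) : ℝ := (S β v t) ^ 2 / R β v t

variable {β : ℝ} {v u : ℕ → ℝ} {n t : ℕ}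

lemma S_zero : S β v 0 = 0 := by simp [S]
lemma Q_zero : Q β v 0 = 0 := by simp [Q]

lemma S_succ : S β v (n + 1) = β * S β v n + v (n + 1) := by
  unfold S
  rw [Finset.sum_Icc_succ_top (by omega : 1 ≤ n + 1), Finset.mul_sum]
  simp only [Nat.sub_self, pow_zero, one_mul]
  congr 1
  apply Finset.sum_congr rfl
  intro s hs
  have hs' : s ≤ n := (Finset.mem_Icc.mp hs).2
  have h : n + 1 - s = (n - s) + 1 := by omega
  rw [h, pow_succ]
  ring

lemma Q_succ : Q β v (n + 1) = β ^ 2 * Q β v n + (v (n + 1)) ^ 2 := by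
  unfold Q
  rw [Finset.sum_Icc_succ_top (by omega : 1 ≤ n + 1), Finset.mul_sum]
  simp only [Nat.sub_self, pow_zero, one_mul]
  congr 1
  apply Finset.sum_congr rfl
  intro s hs
  have hs' : s ≤ n := (Finset.mem_Icc.mp hs).2
  have h : n + 1 - s = (n - s) + 1 := by omega
  rw [h, pow_succ]
  ring

lemma Q_nonneg : 0 ≤ Q β v t := Finset.sum_nonneg fun s _ => sq_nonneg _

lemma R_nonneg : 0 ≤ R β v t := Real.sqrt_nonneg _

lemma R_sq : R β v t ^ 2 = Q β v t := Real.sq_sqrt Q_nonneg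

lemma R_zero : R β v 0 = 0 := by simp [R, Q_zero]

lemma S_eq_zero (h : Q β v t = 0) : S β v t = 0 := by
  apply Finset.sum_eq_zero
  intro s hs
  have h2 := (Finset.sum_eq_zero_iff_of_nonneg (fun s _ => sq_nonneg (β ^ (t - s) * v s))).mp h s hs
  exact pow_eq_zero_iff (two_ne_zero) |>.mp h2

lemma abel (β : ℝ) (v u : ℕ → ℝ) (n : ℕ) :
    ∑ t ∈ Finset.Icc 1 n, v t * u (t - 1)
      = S β v n * u (n - 1)
        + ∑ t ∈ Finset.Icc 1 (n - 1),
            (S β v t * (u (t - 1) - u t) + (1 - β) * (S β v t * u t)) := by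
  induction n with
  | zero => simp [S_zero]
  | succ n ih =>
    rcases Nat.eq_zero_or_pos n with h0 | hpos
    · subst h0
      simp [S, Finset.Icc_self]
    · obtain ⟨m, rfl⟩ : ∃ m, n = m + 1 := ⟨n - 1, by omega⟩
      rw [Finset.sum_Icc_succ_top (by omega : 1 ≤ m + 1 + 1), ih]
      simp only [Nat.add_sub_cancel]
      rw [Finset.sum_Icc_succ_top (by omega : 1 ≤ m + 1)]
      simp only [Nat.add_sub_cancel]
      rw [S_succ (n := m + 1)]
      ring

lemma sum_Icc_one (f : ℕ → ℝ) (n : ℕ) :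
    ∑ t ∈ Finset.Icc 1 n, f t = ∑ i ∈ Finset.range n, f (i + 1) := by
  induction n with
  | zero => simp
  | succ n ih => rw [Finset.sum_Icc_succ_top (by omega), ih, Finset.sum_range_succ]

lemma final_combine (α M P x y : ℝ) (hα : 0 < α) (hM0 : 0 ≤ M) (hP0 : 0 ≤ P)
    (hx : 0 ≤ x) (hy : 0 ≤ y) :
    6 * α * (1 + M + M ^ 2) * (x + y) + (M * (α * M) * x + M * P * x + M * (α * M) * y)
      ≤ 100 * ((α + α * M ^ 2 + M * P) * x + (α + α * M ^ 2) * y) := by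
  nlinarith [mul_nonneg (mul_nonneg hα.le hx) (sq_nonneg (M - 1)),
    mul_nonneg (mul_nonneg hα.le hy) (sq_nonneg (M - 1)),
    mul_nonneg (mul_nonneg hM0 hP0) hx,
    mul_nonneg hα.le hx, mul_nonneg hα.le hy,
    mul_nonneg (mul_nonneg hα.le hx) (mul_nonneg hM0 hM0),
    mul_nonneg (mul_nonneg hα.le hy) (mul_nonneg hM0 hM0)]

/-- Per-step bound, case `Q (t-1) = 0`. -/
lemma case_zero (α M s1 r1 : ℝ) (hα : 0 < α) (hM0 : 0 ≤ M) (hr1nn : 0 ≤ r1)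
    (hs1M : |s1| ≤ M * r1) :
    0 ≤ α / 2 * (0 - s1 ^ 2 / r1) + 6 * α * (1 + M + M ^ 2) * r1 := by
  rcases eq_or_lt_of_le hr1nn with h | h
  · simp [← h]
  · have hY : s1 ^ 2 / r1 ≤ M ^ 2 * r1 := by
      rw [div_le_iff₀ h]
      have h2 : s1 * s1 ≤ M * r1 * (M * r1) := by
        rw [← abs_mul_abs_self s1]
        exact mul_le_mul hs1M hs1M (abs_nonneg s1) (mul_nonneg hM0 hr1nn)
      linarith [h2]
    nlinarith [mul_pos hα h, mul_nonneg (mul_nonneg hα.le h.le) hM0,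
      mul_nonneg (mul_nonneg hα.le h.le) (mul_nonneg hM0 hM0)]

set_option maxHeartbeats 2000000 in
/-- Per-step bound, case `Q (t-1) > 0`. -/
lemma case_pos (α β M w s0 s1 q0 q1 r0 r1 : ℝ) (hα : 0 < α) (hβ0 : 0 < β)
    (hq1 : q1 = β ^ 2 * q0 + w ^ 2) (hs1 : s1 = β * s0 + w)
    (hr0 : r0 ^ 2 = q0) (hr1 : r1 ^ 2 = q1) (hr1nn : 0 ≤ r1)
    (hr0pos : 0 < r0) (hM0 : 0 ≤ M) (hs0M : |s0| ≤ M * r0) (hs1M : |s1| ≤ M * r1)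
    (hβr : β * r0 ≤ r1) :
    w * (-α * s0 / r0) ≤ α / 2 * (β * (s0 ^ 2 / r0) - s1 ^ 2 / r1)
      + 6 * α * (1 + M + M ^ 2) * (r1 - β * r0) := by
  have hr1pos : 0 < r1 := lt_of_lt_of_le (by positivity) hβr
  have hd0 : 0 ≤ r1 - β * r0 := by linarith
  have hkey : w ^ 2 ≤ 2 * r1 * (r1 - β * r0) := by nlinarith [sq_nonneg (r1 - β * r0)]
  by_cases h2 : r1 ≤ 2 * (β * r0)
  · have hE1 : w * (-α * s0 / r0) = α / 2 * (β * (s0 ^ 2 / r0))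
        + α * (w ^ 2 / (2 * β * r0)) - α * (s1 ^ 2 / (2 * β * r0)) := by
      subst hs1
      field_simp
      ring
    have hE2 : s1 ^ 2 / (2 * r1) ≤ s1 ^ 2 / (2 * β * r0) :=
      div_le_div_of_nonneg_left (sq_nonneg s1) (by positivity) (by linarith)
    have hE3 : w ^ 2 / (2 * β * r0) ≤ w ^ 2 / r1 :=
      div_le_div_of_nonneg_left (sq_nonneg w) hr1pos (by linarith)
    have hE4 : w ^ 2 / r1 ≤ 2 * (r1 - β * r0) := by
      rw [div_le_iff₀ hr1pos]
      nlinarith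
    have hW1 : α * (w ^ 2 / (2 * β * r0)) ≤ α * (2 * (r1 - β * r0)) :=
      mul_le_mul_of_nonneg_left (hE3.trans hE4) hα.le
    have hW2 : α * (s1 ^ 2 / (2 * r1)) ≤ α * (s1 ^ 2 / (2 * β * r0)) :=
      mul_le_mul_of_nonneg_left hE2 hα.le
    have hW3 : α * (s1 ^ 2 / (2 * r1)) = α / 2 * (s1 ^ 2 / r1) := by
      field_simp
    have h6 : α * (2 * (r1 - β * r0)) ≤ 6 * α * (1 + M + M ^ 2) * (r1 - β * r0) := by
      nlinarith [mul_nonneg hα.le hd0, mul_nonneg (mul_nonneg hα.le hd0) hM0,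
        mul_nonneg (mul_nonneg hα.le hd0) (mul_nonneg hM0 hM0)]
    linarith
  · push_neg at h2
    have hd2 : r1 ≤ 2 * (r1 - β * r0) := by linarith
    have hwr : |w| ≤ r1 := by nlinarith [sq_abs w, abs_nonneg w]
    have hterm : w * (-α * s0 / r0) ≤ α * M * |w| := by
      have habs : |w * (-α * s0 / r0)| = |w| * (α * |s0| / r0) := by
        rw [abs_mul, abs_div, abs_mul, abs_neg, abs_of_pos hα, abs_of_pos hr0pos]
      have hnum : α * |s0| / r0 ≤ α * (M * r0) / r0 :=
        (div_le_div_iff_of_pos_right hr0pos).mpr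
          (mul_le_mul_of_nonneg_left hs0M hα.le)
      calc w * (-α * s0 / r0) ≤ |w * (-α * s0 / r0)| := le_abs_self _
        _ = |w| * (α * |s0| / r0) := habs
        _ ≤ |w| * (α * (M * r0) / r0) :=
            mul_le_mul_of_nonneg_left hnum (abs_nonneg w)
        _ = α * M * |w| := by
            rw [show α * (M * r0) / r0 = α * M from by field_simp]
            ring
    have hY : s1 ^ 2 / r1 ≤ M ^ 2 * (2 * (r1 - β * r0)) := by
      have h1 : s1 ^ 2 / r1 ≤ M ^ 2 * r1 := by
        rw [div_le_iff₀ hr1pos]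
        have h2 : s1 * s1 ≤ M * r1 * (M * r1) := by
          rw [← abs_mul_abs_self s1]
          exact mul_le_mul hs1M hs1M (abs_nonneg s1) (mul_nonneg hM0 hr1nn)
        linarith [h2]
      calc s1 ^ 2 / r1 ≤ M ^ 2 * r1 := h1
        _ ≤ M ^ 2 * (2 * (r1 - β * r0)) :=
            mul_le_mul_of_nonneg_left hd2 (by positivity)
    have hw2 : α * M * |w| ≤ α * M * (2 * (r1 - β * r0)) := by
      have := hwr.trans hd2
      exact mul_le_mul_of_nonneg_left this (by positivity)
    have hyα : α / 2 * (s1 ^ 2 / r1) ≤ α / 2 * (M ^ 2 * (2 * (r1 - β * r0))) :=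
      mul_le_mul_of_nonneg_left hY (by positivity)
    have hXβ : 0 ≤ α / 2 * (β * (s0 ^ 2 / r0)) := by positivity
    have hfin : α * M * (2 * (r1 - β * r0)) + α / 2 * (M ^ 2 * (2 * (r1 - β * r0)))
        ≤ 6 * α * (1 + M + M ^ 2) * (r1 - β * r0) := by
      nlinarith [mul_nonneg hα.le hd0, mul_nonneg (mul_nonneg hα.le hd0) hM0,
        mul_nonneg (mul_nonneg hα.le hd0) (mul_nonneg hM0 hM0)]
    linarith

end

end Stmt19Aux

set_option maxHeartbeats 4000000 in
open Stmt19Aux in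
theorem stmt_19 :
    ∃ C : ℝ, 0 < C ∧
      ∀ (β α G : ℝ) (T : ℕ) (v u Δ : ℕ → ℝ) (M : ℝ)
        (hβ : β ∈ Set.Ioo (0:ℝ) 1) (hα : 0 < α) (hT : 1 ≤ T)
        (hG : ∀ t ∈ Finset.Icc 1 T, |v t| ≤ G)
        (hΔ0 : Δ 0 = 0)
        (hΔ : ∀ t, 1 ≤ t →
          Δ t = if (∑ s ∈ Finset.Icc 1 t, (β ^ (t - s) * v s) ^ 2) = 0 then 0
            else -α * (∑ s ∈ Finset.Icc 1 t, β ^ (t - s) * v s)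
              / Real.sqrt (∑ s ∈ Finset.Icc 1 t, (β ^ (t - s) * v s) ^ 2))
        (hM : M = (Finset.Icc 1 T).sup' (Finset.nonempty_Icc.mpr hT) (fun t =>
          if (∑ s ∈ Finset.Icc 1 t, (β ^ (t - s) * v s) ^ 2) = 0 then 0
          else |∑ s ∈ Finset.Icc 1 t, β ^ (t - s) * v s|
            / Real.sqrt (∑ s ∈ Finset.Icc 1 t, (β ^ (t - s) * v s) ^ 2)))
        (hu : ∀ t, |u t| ≤ α * M),
        ∑ t ∈ Finset.Icc 1 T, v t * (Δ (t - 1) - u (t - 1))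
          ≤ C * ((α + α * M ^ 2
                + M * (∑ t ∈ Finset.Icc 1 (T - 1), |u t - u (t - 1)|)) * G
                  / Real.sqrt (1 - β)
              + (α + α * M ^ 2) * Real.sqrt (1 - β) * G * T) := by
  refine ⟨100, by norm_num, ?_⟩
  intro β α G T v u Δ M hβ hα hT hG hΔ0 hΔ hM hu
  obtain ⟨hβ0, hβ1⟩ := hβ
  have h1β : 0 < 1 - β := by linarith
  have hsβ : 0 < Real.sqrt (1 - β) := Real.sqrt_pos.mpr h1β
  set ρ : ℝ := G / Real.sqrt (1 - β) with hρdef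
  have h1T : (1 : ℕ) ∈ Finset.Icc 1 T := Finset.mem_Icc.mpr ⟨le_refl 1, hT⟩
  have hTT : T ∈ Finset.Icc 1 T := Finset.mem_Icc.mpr ⟨hT, le_refl T⟩
  have hG0 : 0 ≤ G := (abs_nonneg _).trans (hG 1 h1T)
  have hρ0 : 0 ≤ ρ := div_nonneg hG0 hsβ.le
  -- the sup' function is everywhere nonnegative
  have hf0 : ∀ t : ℕ, (0:ℝ) ≤ (if (∑ s ∈ Finset.Icc 1 t, (β ^ (t - s) * v s) ^ 2) = 0 then 0
      else |∑ s ∈ Finset.Icc 1 t, β ^ (t - s) * v s|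
        / Real.sqrt (∑ s ∈ Finset.Icc 1 t, (β ^ (t - s) * v s) ^ 2)) := by
    intro t
    split_ifs
    · exact le_rfl
    · positivity
  have hM0 : 0 ≤ M := by
    rw [hM]
    exact le_trans (hf0 T) (Finset.le_sup' (fun t =>
      if (∑ s ∈ Finset.Icc 1 t, (β ^ (t - s) * v s) ^ 2) = 0 then (0:ℝ)
      else |∑ s ∈ Finset.Icc 1 t, β ^ (t - s) * v s|
        / Real.sqrt (∑ s ∈ Finset.Icc 1 t, (β ^ (t - s) * v s) ^ 2)) hTT)
  have hSM : ∀ t ∈ Finset.Icc 1 T, |S β v t| ≤ M * R β v t := by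
    intro t ht
    have hle : (if Q β v t = 0 then (0:ℝ) else |S β v t| / R β v t) ≤ M := by
      rw [hM]
      exact Finset.le_sup' (fun t =>
        if (∑ s ∈ Finset.Icc 1 t, (β ^ (t - s) * v s) ^ 2) = 0 then (0:ℝ)
        else |∑ s ∈ Finset.Icc 1 t, β ^ (t - s) * v s|
          / Real.sqrt (∑ s ∈ Finset.Icc 1 t, (β ^ (t - s) * v s) ^ 2)) ht
    by_cases hq : Q β v t = 0
    · rw [S_eq_zero hq]
      simpa using mul_nonneg hM0 (R_nonneg (β := β) (v := v) (t := t))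
    · have hr : 0 < R β v t := Real.sqrt_pos.mpr (lt_of_le_of_ne Q_nonneg (Ne.symm hq))
      rw [if_neg hq] at hle
      exact (div_le_iff₀ hr).mp hle
  -- bound on Q and R
  have hQle : ∀ t, t ≤ T → Q β v t ≤ G ^ 2 / (1 - β) := by
    intro t
    induction t with
    | zero => intro _; rw [Q_zero]; positivity
    | succ n ih =>
      intro hle
      have hQn := ih (by omega)
      have hv : |v (n + 1)| ≤ G := hG _ (Finset.mem_Icc.mpr ⟨by omega, hle⟩)
      have hvsq : (v (n + 1)) ^ 2 ≤ G ^ 2 := by nlinarith [abs_nonneg (v (n+1)), sq_abs (v (n+1))]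
      rw [Q_succ]
      have hD : G ^ 2 / (1 - β) * (1 - β) = G ^ 2 := div_mul_cancel₀ _ h1β.ne'
      have hD0 : 0 ≤ G ^ 2 / (1 - β) := by positivity
      nlinarith [mul_le_mul_of_nonneg_left hQn (sq_nonneg β),
        mul_nonneg hD0 (by nlinarith : (0:ℝ) ≤ β - β ^ 2)]
  have hRρ : ∀ t, t ≤ T → R β v t ≤ ρ := by
    intro t ht
    have h1 : R β v t ≤ Real.sqrt (G ^ 2 / (1 - β)) := Real.sqrt_le_sqrt (hQle t ht)
    rwa [Real.sqrt_div (sq_nonneg G), Real.sqrt_sq hG0] at h1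
  have hSρ : ∀ t ∈ Finset.Icc 1 T, |S β v t| ≤ M * ρ := by
    intro t ht
    refine (hSM t ht).trans ?_
    exact mul_le_mul_of_nonneg_left (hRρ t (Finset.mem_Icc.mp ht).2) hM0
  -- closed form for Δ
  have hΔeq : ∀ m, Δ m = if Q β v m = 0 then 0 else -α * S β v m / R β v m := by
    intro m
    match m with
    | 0 => rw [hΔ0, if_pos Q_zero]
    | Nat.succ k => exact hΔ (k + 1) (by omega)
  -- per-step bound
  have claim : ∀ t ∈ Finset.Icc 1 T, v t * Δ (t - 1) ≤
      α / 2 * (β * A β v (t - 1) - A β v t)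
        + 6 * α * (1 + M + M ^ 2) * (R β v t - β * R β v (t - 1)) := by
    intro t ht
    have ht1 := (Finset.mem_Icc.mp ht).1
    have htT := (Finset.mem_Icc.mp ht).2
    obtain ⟨m, rfl⟩ : ∃ m, t = m + 1 := ⟨t - 1, by omega⟩
    simp only [Nat.add_sub_cancel]
    have hs1M : |S β v (m + 1)| ≤ M * R β v (m + 1) := hSM (m + 1) ht
    by_cases hq : Q β v m = 0
    · have hΔm0 : Δ m = 0 := by rw [hΔeq m, if_pos hq]
      have hr0z : R β v m = 0 := by
        have : R β v m ^ 2 = 0 := by rw [R_sq, hq]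
        exact pow_eq_zero_iff two_ne_zero |>.mp this
      have hAm : A β v m = 0 := by rw [A, S_eq_zero hq]; simp
      rw [hΔm0, mul_zero, hAm, hr0z]
      have := case_zero α M (S β v (m + 1)) (R β v (m + 1)) hα hM0 R_nonneg hs1M
      calc (0:ℝ) ≤ α / 2 * (0 - S β v (m+1) ^ 2 / R β v (m+1))
            + 6 * α * (1 + M + M ^ 2) * R β v (m + 1) := this
        _ = α / 2 * (β * 0 - A β v (m + 1))
            + 6 * α * (1 + M + M ^ 2) * (R β v (m + 1) - β * 0) := by rw [A]; ring
    · have hq0pos : 0 < Q β v m := lt_of_le_of_ne Q_nonneg (Ne.symm hq)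
      have hr0pos : 0 < R β v m := Real.sqrt_pos.mpr hq0pos
      have hm1 : 1 ≤ m := by
        by_contra h
        have : m = 0 := by omega
        rw [this, Q_zero] at hq
        exact hq rfl
      have hs0M : |S β v m| ≤ M * R β v m :=
        hSM m (Finset.mem_Icc.mpr ⟨hm1, by omega⟩)
      have hβr : β * R β v m ≤ R β v (m + 1) := by
        have h1 : β * R β v m = Real.sqrt (β ^ 2 * Q β v m) := by
          rw [Real.sqrt_mul (sq_nonneg β), Real.sqrt_sq hβ0.le, R]
        rw [h1, R]
        apply Real.sqrt_le_sqrt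
        rw [Q_succ]
        nlinarith [sq_nonneg (v (m + 1))]
      rw [hΔeq m, if_neg hq, A, A]
      exact case_pos α β M (v (m + 1)) (S β v m) (S β v (m + 1)) (Q β v m) (Q β v (m + 1))
        (R β v m) (R β v (m + 1)) hα hβ0 Q_succ S_succ R_sq R_sq R_nonneg hr0pos hM0
        hs0M hs1M hβr
  -- sum of per-step bounds
  have hT1 : ∑ t ∈ Finset.Icc 1 T, (β * A β v (t - 1) - A β v t) ≤ 0 := by
    rw [sum_Icc_one]
    simp only [Nat.add_sub_cancel]
    calc ∑ i ∈ Finset.range T, (β * A β v i - A β v (i + 1))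
        ≤ ∑ i ∈ Finset.range T, (A β v i - A β v (i + 1)) := by
          apply Finset.sum_le_sum
          intro i _
          have hAnn : 0 ≤ A β v i := div_nonneg (sq_nonneg _) R_nonneg
          nlinarith
      _ = A β v 0 - A β v T := Finset.sum_range_sub' _ _
      _ ≤ 0 := by
          have h1 : A β v 0 = 0 := by rw [A, S_zero]; simp
          have h2 : 0 ≤ A β v T := div_nonneg (sq_nonneg _) R_nonneg
          linarith
  have hT2 : ∑ t ∈ Finset.Icc 1 T, (R β v t - β * R β v (t - 1)) ≤ ρ + (1 - β) * T * ρ := by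
    rw [sum_Icc_one]
    simp only [Nat.add_sub_cancel]
    have he : ∀ i, R β v (i + 1) - β * R β v i
        = (R β v (i + 1) - R β v i) + (1 - β) * R β v i := by intro i; ring
    calc ∑ i ∈ Finset.range T, (R β v (i + 1) - β * R β v i)
        = ∑ i ∈ Finset.range T, ((R β v (i + 1) - R β v i) + (1 - β) * R β v i) := by
          exact Finset.sum_congr rfl fun i _ => he i
      _ = (R β v T - R β v 0) + ∑ i ∈ Finset.range T, (1 - β) * R β v i := by
          rw [Finset.sum_add_distrib, Finset.sum_range_sub]
      _ ≤ ρ + (1 - β) * T * ρ := by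
          have h1 : R β v T - R β v 0 ≤ ρ := by
            rw [R_zero]
            simpa using hRρ T le_rfl
          have h2 : ∑ i ∈ Finset.range T, (1 - β) * R β v i ≤ (1 - β) * T * ρ := by
            calc ∑ i ∈ Finset.range T, (1 - β) * R β v i
                ≤ ∑ _i ∈ Finset.range T, (1 - β) * ρ := by
                  apply Finset.sum_le_sum
                  intro i hi
                  exact mul_le_mul_of_nonneg_left
                    (hRρ i (Finset.mem_range.mp hi).le) h1β.le
              _ = (1 - β) * T * ρ := by
                  rw [Finset.sum_const, Finset.card_range, nsmul_eq_mul]; ring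
          linarith
    -- Part A: sum of per-step bounds
  have hPA : ∑ t ∈ Finset.Icc 1 T, v t * Δ (t - 1)
      ≤ 6 * α * (1 + M + M ^ 2) * (ρ + (1 - β) * ↑T * ρ) := by
    calc ∑ t ∈ Finset.Icc 1 T, v t * Δ (t - 1)
        ≤ ∑ t ∈ Finset.Icc 1 T, (α / 2 * (β * A β v (t - 1) - A β v t)
            + 6 * α * (1 + M + M ^ 2) * (R β v t - β * R β v (t - 1))) :=
          Finset.sum_le_sum claim
      _ = α / 2 * (∑ t ∈ Finset.Icc 1 T, (β * A β v (t - 1) - A β v t))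
            + 6 * α * (1 + M + M ^ 2)
              * (∑ t ∈ Finset.Icc 1 T, (R β v t - β * R β v (t - 1))) := by
          rw [Finset.sum_add_distrib, Finset.mul_sum, Finset.mul_sum]
      _ ≤ α / 2 * 0 + 6 * α * (1 + M + M ^ 2) * (ρ + (1 - β) * ↑T * ρ) := by
          have c1 : α / 2 * (∑ t ∈ Finset.Icc 1 T, (β * A β v (t - 1) - A β v t))
              ≤ α / 2 * 0 := mul_le_mul_of_nonneg_left hT1 (by positivity)
          have c2 : 6 * α * (1 + M + M ^ 2)
                * (∑ t ∈ Finset.Icc 1 T, (R β v t - β * R β v (t - 1)))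
              ≤ 6 * α * (1 + M + M ^ 2) * (ρ + (1 - β) * ↑T * ρ) :=
            mul_le_mul_of_nonneg_left hT2 (by positivity)
          linarith
      _ = 6 * α * (1 + M + M ^ 2) * (ρ + (1 - β) * ↑T * ρ) := by ring
  -- Part B: comparator term via Abel summation
  set P : ℝ := ∑ t ∈ Finset.Icc 1 (T - 1), |u t - u (t - 1)| with hPdef
  have hP0 : 0 ≤ P := Finset.sum_nonneg fun t _ => abs_nonneg _
  have hPB : -(∑ t ∈ Finset.Icc 1 T, v t * u (t - 1))
      ≤ M * (α * M) * ρ + M * P * ρ + M * (α * M) * ((1 - β) * ↑T * ρ) := by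
    rw [abel β v u T]
    have hb1 : -(S β v T * u (T - 1)) ≤ M * ρ * (α * M) := by
      calc -(S β v T * u (T - 1)) ≤ |S β v T * u (T - 1)| := neg_le_abs _
        _ = |S β v T| * |u (T - 1)| := abs_mul _ _
        _ ≤ M * ρ * (α * M) :=
            mul_le_mul (hSρ T hTT) (hu (T - 1)) (abs_nonneg _) (mul_nonneg hM0 hρ0)
    have hb2 : -(∑ t ∈ Finset.Icc 1 (T - 1),
          (S β v t * (u (t - 1) - u t) + (1 - β) * (S β v t * u t)))
        ≤ M * ρ * P + (↑(T - 1) : ℝ) * ((1 - β) * (M * ρ * (α * M))) := by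
      rw [← Finset.sum_neg_distrib]
      calc ∑ t ∈ Finset.Icc 1 (T - 1),
            -(S β v t * (u (t - 1) - u t) + (1 - β) * (S β v t * u t))
          ≤ ∑ t ∈ Finset.Icc 1 (T - 1),
              (M * ρ * |u t - u (t - 1)| + (1 - β) * (M * ρ * (α * M))) := by
            apply Finset.sum_le_sum
            intro t htm
            obtain ⟨ht1', ht2'⟩ := Finset.mem_Icc.mp htm
            have hSt : |S β v t| ≤ M * ρ :=
              hSρ t (Finset.mem_Icc.mpr ⟨ht1', by omega⟩)
            have k1 : -(S β v t * (u (t - 1) - u t)) ≤ M * ρ * |u t - u (t - 1)| := by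
              calc -(S β v t * (u (t - 1) - u t))
                  ≤ |S β v t * (u (t - 1) - u t)| := neg_le_abs _
                _ = |S β v t| * |u t - u (t - 1)| := by rw [abs_mul, abs_sub_comm]
                _ ≤ M * ρ * |u t - u (t - 1)| :=
                    mul_le_mul_of_nonneg_right hSt (abs_nonneg _)
            have k2 : -((1 - β) * (S β v t * u t)) ≤ (1 - β) * (M * ρ * (α * M)) := by
              have habs2 : |S β v t * u t| ≤ M * ρ * (α * M) := by
                rw [abs_mul]
                exact mul_le_mul hSt (hu t) (abs_nonneg _) (mul_nonneg hM0 hρ0)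
              calc -((1 - β) * (S β v t * u t))
                  = (1 - β) * (-(S β v t * u t)) := by ring
                _ ≤ (1 - β) * |S β v t * u t| :=
                    mul_le_mul_of_nonneg_left (neg_le_abs _) h1β.le
                _ ≤ (1 - β) * (M * ρ * (α * M)) :=
                    mul_le_mul_of_nonneg_left habs2 h1β.le
            linarith
        _ = M * ρ * P + (↑(T - 1) : ℝ) * ((1 - β) * (M * ρ * (α * M))) := by
            rw [Finset.sum_add_distrib, ← Finset.mul_sum, Finset.sum_const,
              Nat.card_Icc]
            simp only [Nat.add_sub_cancel, nsmul_eq_mul, hPdef]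
    have hcast : ((T - 1 : ℕ) : ℝ) ≤ (T : ℝ) := Nat.cast_le.mpr (Nat.sub_le T 1)
    have hmono : (↑(T - 1) : ℝ) * ((1 - β) * (M * ρ * (α * M)))
        ≤ (↑T : ℝ) * ((1 - β) * (M * ρ * (α * M))) :=
      mul_le_mul_of_nonneg_right hcast (by positivity)
    have := neg_add (S β v T * u (T - 1))
      (∑ t ∈ Finset.Icc 1 (T - 1), (S β v t * (u (t - 1) - u t) + (1 - β) * (S β v t * u t)))
    nlinarith [hb1, hb2, hmono]
  -- combine
  have hsplit : ∑ t ∈ Finset.Icc 1 T, v t * (Δ (t - 1) - u (t - 1))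
      = (∑ t ∈ Finset.Icc 1 T, v t * Δ (t - 1))
        - ∑ t ∈ Finset.Icc 1 T, v t * u (t - 1) := by
    rw [← Finset.sum_sub_distrib]
    exact Finset.sum_congr rfl fun t _ => by ring
  have hTnn : (0 : ℝ) ≤ (T : ℝ) := Nat.cast_nonneg T
  have hy0 : 0 ≤ (1 - β) * ↑T * ρ := by positivity
  have hρβ' : (1 - β) * ρ = Real.sqrt (1 - β) * G := by
    rw [hρdef, show (1 - β) * (G / Real.sqrt (1 - β))
      = ((1 - β) / Real.sqrt (1 - β)) * G from by ring, Real.div_sqrt]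
  have e1 : (α + α * M ^ 2 + M * P) * ρ
      = (α + α * M ^ 2 + M * P) * G / Real.sqrt (1 - β) := by
    rw [hρdef]; ring
  have e2 : (α + α * M ^ 2) * ((1 - β) * ↑T * ρ)
      = (α + α * M ^ 2) * Real.sqrt (1 - β) * G * ↑T := by
    rw [show (1 - β) * (↑T : ℝ) * ρ = ((1 - β) * ρ) * ↑T from by ring, hρβ']
    ring
  have hcomb := final_combine α M P ρ ((1 - β) * ↑T * ρ) hα hM0 hP0 hρ0 hy0
  calc ∑ t ∈ Finset.Icc 1 T, v t * (Δ (t - 1) - u (t - 1))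
      = (∑ t ∈ Finset.Icc 1 T, v t * Δ (t - 1))
        - ∑ t ∈ Finset.Icc 1 T, v t * u (t - 1) := hsplit
    _ ≤ 6 * α * (1 + M + M ^ 2) * (ρ + (1 - β) * ↑T * ρ)
        + (M * (α * M) * ρ + M * P * ρ + M * (α * M) * ((1 - β) * ↑T * ρ)) := by
        linarith [hPA, hPB]
    _ ≤ 100 * ((α + α * M ^ 2 + M * P) * ρ + (α + α * M ^ 2) * ((1 - β) * ↑T * ρ)) :=
        hcomb
    _ = 100 * ((α + α * M ^ 2 + M * P) * G / Real.sqrt (1 - β)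
        + (α + α * M ^ 2) * Real.sqrt (1 - β) * G * ↑T) := by rw [e1, e2]
end
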